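/- arXiv:1311.4382 — 4 statements merged into one kernel-verified Lean document; each statement's English description precedes it below -/
import Mathlib

section
/- For every n ≥ 1, the number 2/(n(n+1)) * binomial(4n+1, n-1) is a positive integer. -/
/-- For every `n ≥ 1`, the number `2/(n(n+1)) * C(4n+1, n-1)` is a positive integer. -/
theorem chapoton_formula_integral (n : ℕ) (hn : 1 ≤ n) :
    ∃ k : ℕ, 0 < k ∧ 2 * Nat.choose (4 * n + 1) (n - 1) = k * (n * (n + 1)) := by
  obtain ⟨m, rfl⟩ : ∃ m, n = m + 1 := ⟨n - 1, (Nat.succ_pred_eq_of_pos hn).symm⟩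
  set N := 4 * (m + 1) + 1 with hN
  have h1 : N.choose (m + 1) * (m + 1) = N.choose m * (N - m) :=
    Nat.choose_succ_right_eq N m
  have h2 : N.choose (m + 2) * (m + 2) = N.choose (m + 1) * (N - (m + 1)) :=
    Nat.choose_succ_right_eq N (m + 1)
  have hNm : N - m = 3 * m + 5 := by omega
  have hNm1 : N - (m + 1) = 3 * m + 4 := by omega
  rw [hNm] at h1
  rw [hNm1] at h2
  set a := N.choose (m + 2) with ha
  set b := N.choose m with hb
  set M := (m + 1) * (m + 2) with hM
  have key : a * M = 9 * b * M + 2 * b := by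
    have e1 : a * (m + 2) * (m + 1) = N.choose (m + 1) * (m + 1) * (3 * m + 4) := by
      rw [h2]; ring
    rw [h1] at e1
    have e2 : a * M = a * (m + 2) * (m + 1) := by rw [hM]; ring
    rw [e2, e1, hM]; ring
  have hbpos : 0 < b := Nat.choose_pos (by omega)
  have hMpos : 2 ≤ M := by
    have : 2 ≤ (m + 1) * (m + 2) := by nlinarith
    rw [hM]; exact this
  have hle : 9 * b ≤ a := by
    by_contra h
    push_neg at h
    have h' : a + 1 ≤ 9 * b := h
    have := Nat.mul_le_mul_right M h'
    have hexp : (a + 1) * M = a * M + M := by ring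
    rw [hexp, key] at this
    linarith
  have hsub : (a - 9 * b) * M = a * M - 9 * b * M := Nat.sub_mul a (9 * b) M
  have hgoal : (a - 9 * b) * M = 2 * b := by
    rw [hsub, key, Nat.add_sub_cancel_left]
  have hkpos : 0 < a - 9 * b := by
    rcases Nat.eq_zero_or_pos (a - 9 * b) with h0 | h0
    · rw [h0, Nat.zero_mul] at hgoal; omega
    · exact h0
  refine ⟨a - 9 * b, hkpos, ?_⟩
  rw [Nat.add_sub_cancel]
  exact hgoal.symm
end

section
/- For every m ≥ 1 and n ≥ 1, the number (m+1)/(n(mn+1)) * binomial((m+1)^2·n + m, n-1) is a positive integer. -/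
/-- For every `m ≥ 1` and `n ≥ 1`, the number
`(m+1)/(n(mn+1)) * C((m+1)^2·n + m, n-1)` is a positive integer. -/
theorem m_tamari_formula_integral (m n : ℕ) (hm : 1 ≤ m) (hn : 1 ≤ n) :
    ∃ k : ℕ, 0 < k ∧
      (m + 1) * Nat.choose ((m + 1) ^ 2 * n + m) (n - 1) = k * (n * (m * n + 1)) := by
  obtain ⟨p, rfl⟩ : ∃ p, n = p + 1 := ⟨n - 1, by omega⟩
  set n : ℕ := p + 1 with hn'
  have hsub : n - 1 = p := rfl
  set N : ℕ := (m + 1) ^ 2 * n + m with hNdef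
  set C1 : ℕ := Nat.choose N p with hC1
  have hcop : Nat.Coprime n (m * n + 1) := by
    exact (Nat.coprime_mul_right_add_right n 1 m).mpr (Nat.coprime_one_right n)
  -- (a) n ∣ (m+1) * C1
  have ha : n ∣ (m + 1) * C1 := by
    have h1 : Nat.choose N n * n = C1 * (N - p) := Nat.choose_succ_right_eq N p
    have h2 : N - p = m * (m + 2) * n + (m + 1) := by
      have : N = (m * (m + 2) * n + (m + 1)) + p := by rw [hNdef, hn']; ring
      omega
    rw [h2, Nat.mul_add] at h1
    have h3 : n ∣ C1 * (m * (m + 2) * n) + C1 * (m + 1) := ⟨Nat.choose N n, by rw [← Nat.mul_add, ← h1, hn']; ring⟩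
    have h4 : n ∣ C1 * (m * (m + 2) * n) := ⟨C1 * (m * (m + 2)), by ring⟩
    have h5 : n ∣ C1 * (m + 1) := (Nat.dvd_add_right h4).mp h3
    rwa [Nat.mul_comm] at h5
  -- (b) (m*n+1) ∣ choose (N+1) n
  have hb : (m * n + 1) ∣ Nat.choose (N + 1) n := by
    have h1 : Nat.choose (N + 1) n * n = Nat.choose (N + 1) p * ((N + 1) - p) :=
      Nat.choose_succ_right_eq (N + 1) p
    have h2 : (N + 1) - p = (m + 2) * (m * n + 1) := by
      have : N + 1 = (m + 2) * (m * n + 1) + p := by rw [hNdef, hn']; ring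
      omega
    have h3 : (m * n + 1) ∣ Nat.choose (N + 1) n * n := by
      rw [h1, h2]; exact ⟨Nat.choose (N + 1) p * (m + 2), by ring⟩
    exact (Nat.Coprime.symm hcop).dvd_of_dvd_mul_right h3
  -- (c) (m*n+1) ∣ (m+1) * C1
  have hc : (m * n + 1) ∣ (m + 1) * C1 := by
    have h1 : (N + 1) * C1 = Nat.choose (N + 1) n * n := Nat.add_one_mul_choose_eq N p
    have h2 : N + 1 = (m + 1) * (m * n + 1) + (m + 1) * n := by rw [hNdef, hn']; ring
    have h3 : (m * n + 1) ∣ (m + 1) * (m * n + 1) * C1 + (m + 1) * n * C1 := by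
      have heq : (m + 1) * (m * n + 1) * C1 + (m + 1) * n * C1 = (N + 1) * C1 := by
        rw [h2]; ring
      rw [heq, h1]
      exact Dvd.dvd.mul_right hb n
    have h4 : (m * n + 1) ∣ (m + 1) * (m * n + 1) * C1 := ⟨(m + 1) * C1, by ring⟩
    have h5 : (m * n + 1) ∣ (m + 1) * n * C1 := (Nat.dvd_add_right h4).mp h3
    have h6 : (m + 1) * n * C1 = n * ((m + 1) * C1) := by ring
    rw [h6] at h5
    exact (Nat.Coprime.symm hcop).dvd_of_dvd_mul_left h5
  -- combine
  have hd : n * (m * n + 1) ∣ (m + 1) * C1 := Nat.Coprime.mul_dvd_of_dvd_of_dvd hcop ha hc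
  obtain ⟨k, hk⟩ := hd
  have hple : p ≤ N := by
    have : n ≤ N := by
      calc n ≤ (m + 1) ^ 2 * n := Nat.le_mul_of_pos_left n (by positivity)
        _ ≤ N := Nat.le_add_right _ _
    omega
  have hC1pos : 0 < C1 := Nat.choose_pos hple
  have hpos : 0 < (m + 1) * C1 := by positivity
  refine ⟨k, ?_, by rw [hsub, ← hC1, hk]; ring⟩
  rcases Nat.eq_zero_or_pos k with h | h
  · rw [h, Nat.mul_zero] at hk; omega
  · exact h
end

section
/- A finite poset on {1,...,n} is an interval-poset (i.e., arises from an interval of the Tamari lattice) if and only if for all a < b < c: a ≺ c implies b ≺ c, and c ≺ a implies b ≺ a. -/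
open Tree

/-- One right rotation somewhere in a binary tree: `y(x(A,B),C) → x(A,y(B,C))`. -/
inductive RightRot : Tree Unit → Tree Unit → Prop
  | root (A B C : Tree Unit) :
      RightRot (node () (node () A B) C) (node () A (node () B C))
  | left {A A' : Tree Unit} (B : Tree Unit) :
      RightRot A A' → RightRot (node () A B) (node () A' B)
  | right (A : Tree Unit) {B B' : Tree Unit} :
      RightRot B B' → RightRot (node () A B) (node () A B')

/-- The Tamari order on binary trees. -/
def tamariLE : Tree Unit → Tree Unit → Prop := Relation.ReflTransGen RightRot

/-- Decreasing relations of the binary-search-tree labelling of a binary tree: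
`decRelT T b a` iff, labelling internal nodes in in-order by `1,…,n`, the node
`b` lies in the right subtree of the node `a` (so `b > a` and `b ≺ a`). -/
def decRelT : Tree Unit → ℕ → ℕ → Prop
  | BinaryTree.nil, _, _ => False
  | BinaryTree.node _ A B, i, j =>
      let p := A.numNodes + 1
      (i < p ∧ j < p ∧ decRelT A i j) ∨
      (p < i ∧ p < j ∧ decRelT B (i - p) (j - p)) ∨
      (j = p ∧ p < i ∧ i ≤ p + B.numNodes)

/-- Increasing relations of the binary-search-tree labelling of a binary tree:
`incRelT T a c` iff the node `a` lies in the left subtree of the node `c`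
(so `a < c` and `a ≺ c`). -/
def incRelT : Tree Unit → ℕ → ℕ → Prop
  | BinaryTree.nil, _, _ => False
  | BinaryTree.node _ A B, i, j =>
      let p := A.numNodes + 1
      (i < p ∧ j < p ∧ incRelT A i j) ∨
      (p < i ∧ p < j ∧ incRelT B (i - p) (j - p)) ∨
      (j = p ∧ 1 ≤ i ∧ i < p)

/-- A relation on `{1,…,n}` (as `Fin n`) is an interval-poset relation:
a partial order such that for `a < b < c`, `a ≺ c` implies `b ≺ c` and
`c ≺ a` implies `b ≺ a`. -/
def IsIntervalRel (n : ℕ) (r : Fin n → Fin n → Prop) : Prop :=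
  (∀ a, r a a) ∧
  (∀ a b, r a b → r b a → a = b) ∧
  (∀ a b c, r a b → r b c → r a c) ∧
  (∀ a b c : Fin n, a < b → b < c → r a c → r b c) ∧
  (∀ a b c : Fin n, a < b → b < c → r c a → r b a)

/-- `fVec T a = a + size of right subtree of node a` (in-order labels `1..n`). -/
def fVec : BinaryTree Unit → ℕ → ℕ
  | BinaryTree.nil, _ => 0
  | BinaryTree.node _ A B, i =>
      let p := (BinaryTree.numNodes A) + 1
      if i < p then fVec A i else if i = p then p + (BinaryTree.numNodes B) else p + fVec B (i - p)

/-- `gVec T a = a - size of left subtree of node a`. -/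
def gVec : BinaryTree Unit → ℕ → ℕ
  | BinaryTree.nil, _ => 1
  | BinaryTree.node _ A B, i =>
      let p := (BinaryTree.numNodes A) + 1
      if i < p then gVec A i else if i = p then 1 else p + gVec B (i - p)

lemma fVec_zero (T : BinaryTree Unit) : fVec T 0 = 0 := by
  induction T with
  | nil => rfl
  | node _ A B ihA ihB => simp [fVec, Nat.succ_pos, ihA]

lemma fVec_lb (T : BinaryTree Unit) : ∀ i, 1 ≤ i → i ≤ (BinaryTree.numNodes T) → i ≤ fVec T i := by
  induction T with
  | nil => intro i h1 h2; simp only [BinaryTree.numNodes] at h2; omega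
  | node _ A B ihA ihB =>
    intro i h1 h2
    simp only [BinaryTree.numNodes] at h2
    simp only [fVec]
    split
    · exact ihA i h1 (by omega)
    · split
      · omega
      · rename_i h3 h4
        have := ihB (i - ((BinaryTree.numNodes A) + 1)) (by omega) (by omega)
        omega

lemma fVec_ub (T : BinaryTree Unit) : ∀ i, 1 ≤ i → i ≤ (BinaryTree.numNodes T) → fVec T i ≤ (BinaryTree.numNodes T) := by
  induction T with
  | nil => intro i h1 h2; simp at h2; omega
  | node _ A B ihA ihB =>
    intro i h1 h2
    simp only [BinaryTree.numNodes] at h2 ⊢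
    simp only [fVec]
    split
    · rename_i h3
      have := ihA i h1 (by omega)
      omega
    · split
      · omega
      · rename_i h3 h4
        have := ihB (i - ((BinaryTree.numNodes A) + 1)) (by omega) (by omega)
        omega

lemma fVec_out (T : BinaryTree Unit) : ∀ i, (BinaryTree.numNodes T) < i → fVec T i < i := by
  induction T with
  | nil => intro i h; simp only [BinaryTree.numNodes] at h; simp only [fVec]; omega
  | node _ A B ihA ihB =>
    intro i h
    simp only [BinaryTree.numNodes] at h
    simp only [fVec]
    split
    · rename_i h3; omega
    · split
      · omega
      · rename_i h3 h4
        have := ihB (i - ((BinaryTree.numNodes A) + 1)) (by omega)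
        omega

lemma fVec_valid (T : BinaryTree Unit) : ∀ a b, a < b → b ≤ fVec T a → fVec T b ≤ fVec T a := by
  induction T with
  | nil => intro a b h1 h2; simp only [fVec] at h2; omega
  | node u A B ihA ihB =>
    intro a b h1 h2
    by_cases ha0 : a = 0
    · rw [ha0, fVec_zero] at h2; omega
    set p := (BinaryTree.numNodes A) + 1 with hp
    rcases Nat.lt_trichotomy a p with hap | hap | hap
    · -- a in A
      have hfa : fVec (BinaryTree.node u A B) a = fVec A a := by
        simp only [fVec]; rw [if_pos hap]
      have hAub : fVec A a ≤ (BinaryTree.numNodes A) := fVec_ub A a (by omega) (by omega)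
      rw [hfa] at h2
      have hbp : b < p := by omega
      have hfb : fVec (BinaryTree.node u A B) b = fVec A b := by
        simp only [fVec]; rw [if_pos hbp]
      rw [hfa, hfb]; exact ihA a b h1 h2
    · -- a is the root
      have hfa : fVec (BinaryTree.node u A B) a = p + (BinaryTree.numNodes B) := by
        simp only [fVec]; rw [if_neg (by omega), if_pos hap]
      rw [hfa] at h2
      have hbp : p < b := by omega
      have hfb : fVec (BinaryTree.node u A B) b = p + fVec B (b - p) := by
        simp only [fVec]; rw [if_neg (by omega), if_neg (by omega)]
      rw [hfa, hfb]
      rcases le_or_gt (b - p) (BinaryTree.numNodes B) with hc | hc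
      · rcases Nat.eq_zero_or_pos (b - p) with h0 | h0
        · have := fVec_zero B; omega
        · have := fVec_ub B (b - p) h0 hc; omega
      · have := fVec_out B (b - p) hc; omega
    · -- a in B
      have hfa : fVec (BinaryTree.node u A B) a = p + fVec B (a - p) := by
        simp only [fVec]; rw [if_neg (by omega), if_neg (by omega)]
      have hfb : fVec (BinaryTree.node u A B) b = p + fVec B (b - p) := by
        simp only [fVec]; rw [if_neg (by omega), if_neg (by omega)]
      rw [hfa] at h2
      rw [hfa, hfb]
      have := ihB (a - p) (b - p) (by omega) (by omega)
      omega
lemma gVec_pos (T : BinaryTree Unit) : ∀ i, 1 ≤ gVec T i := by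
  induction T with
  | nil => intro i; simp [gVec]
  | node u A B ihA ihB =>
    intro i
    simp only [gVec]
    split
    · exact ihA i
    · split
      · omega
      · have := ihB (i - ((BinaryTree.numNodes A) + 1)); omega

lemma gVec_ub (T : BinaryTree Unit) : ∀ i, 1 ≤ i → i ≤ (BinaryTree.numNodes T) → gVec T i ≤ i := by
  induction T with
  | nil => intro i h1 h2; simp only [BinaryTree.numNodes] at h2; omega
  | node u A B ihA ihB =>
    intro i h1 h2
    simp only [BinaryTree.numNodes] at h2
    simp only [gVec]
    split
    · exact ihA i h1 (by omega)
    · split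
      · omega
      · rename_i h3 h4
        have := ihB (i - ((BinaryTree.numNodes A) + 1)) (by omega) (by omega)
        omega

lemma gVec_valid (T : BinaryTree Unit) :
    ∀ b c, b < c → c ≤ (BinaryTree.numNodes T) → gVec T c ≤ b → gVec T c ≤ gVec T b := by
  induction T with
  | nil => intro b c h1 h2; simp only [BinaryTree.numNodes] at h2; omega
  | node u A B ihA ihB =>
    intro b c h1 h2 h3
    simp only [BinaryTree.numNodes] at h2
    set p := (BinaryTree.numNodes A) + 1 with hp
    rcases Nat.lt_trichotomy c p with hcp | hcp | hcp
    · have hgc : gVec (BinaryTree.node u A B) c = gVec A c := by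
        simp only [gVec]; rw [if_pos hcp]
      have hgb : gVec (BinaryTree.node u A B) b = gVec A b := by
        simp only [gVec]; rw [if_pos (by omega)]
      rw [hgc] at h3 ⊢; rw [hgb]
      exact ihA b c h1 (by omega) h3
    · have hgc : gVec (BinaryTree.node u A B) c = 1 := by
        simp only [gVec]; rw [if_neg (by omega), if_pos hcp]
      rw [hgc]; exact gVec_pos _ b
    · have hgc : gVec (BinaryTree.node u A B) c = p + gVec B (c - p) := by
        simp only [gVec]; rw [if_neg (by omega), if_neg (by omega)]
      rw [hgc] at h3 ⊢
      have hbp : p < b := by have := gVec_pos B (c - p); omega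
      have hgb : gVec (BinaryTree.node u A B) b = p + gVec B (b - p) := by
        simp only [gVec]; rw [if_neg (by omega), if_neg (by omega)]
      rw [hgb]
      have := ihB (b - p) (c - p) (by omega) (by omega) (by omega)
      omega

/-- Nodes strictly within the right subtree interval of `a` have `g` above `a`. -/
lemma gVec_gt_of_le_fVec (T : BinaryTree Unit) :
    ∀ a c, a < c → c ≤ fVec T a → a < gVec T c := by
  induction T with
  | nil => intro a c h1 h2; simp only [fVec] at h2; omega
  | node u A B ihA ihB =>
    intro a c h1 h2
    by_cases ha0 : a = 0
    · have := gVec_pos (BinaryTree.node u A B) c; omega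
    set p := (BinaryTree.numNodes A) + 1 with hp
    rcases Nat.lt_trichotomy a p with hap | hap | hap
    · have hfa : fVec (BinaryTree.node u A B) a = fVec A a := by
        simp only [fVec]; rw [if_pos hap]
      have hub : fVec A a ≤ (BinaryTree.numNodes A) := fVec_ub A a (by omega) (by omega)
      rw [hfa] at h2
      have hgc : gVec (BinaryTree.node u A B) c = gVec A c := by
        simp only [gVec]; rw [if_pos (by omega)]
      rw [hgc]; exact ihA a c h1 h2
    · have hcp : p < c := by omega
      have hgc : gVec (BinaryTree.node u A B) c = p + gVec B (c - p) := by
        simp only [gVec]; rw [if_neg (by omega), if_neg (by omega)]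
      rw [hgc]
      have := gVec_pos B (c - p)
      omega
    · have hfa : fVec (BinaryTree.node u A B) a = p + fVec B (a - p) := by
        simp only [fVec]; rw [if_neg (by omega), if_neg (by omega)]
      rw [hfa] at h2
      have hgc : gVec (BinaryTree.node u A B) c = p + gVec B (c - p) := by
        simp only [gVec]; rw [if_neg (by omega), if_neg (by omega)]
      rw [hgc]
      have := ihB (a - p) (c - p) (by omega) (by omega)
      omega

/-- The node just past the subtree of `a` has `g` at most `a`. -/
lemma gVec_succ_fVec (T : BinaryTree Unit) :
    ∀ a, 1 ≤ a → a ≤ (BinaryTree.numNodes T) → fVec T a < (BinaryTree.numNodes T) →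
      gVec T (fVec T a + 1) ≤ a := by
  induction T with
  | nil => intro a h1 h2; simp only [BinaryTree.numNodes] at h2; omega
  | node u A B ihA ihB =>
    intro a h1 h2 h3
    simp only [BinaryTree.numNodes] at h2 h3
    set p := (BinaryTree.numNodes A) + 1 with hp
    rcases Nat.lt_trichotomy a p with hap | hap | hap
    · have hfa : fVec (BinaryTree.node u A B) a = fVec A a := by
        simp only [fVec]; rw [if_pos hap]
      have hub : fVec A a ≤ (BinaryTree.numNodes A) := fVec_ub A a (by omega) (by omega)
      rw [hfa]
      rcases lt_or_eq_of_le hub with hlt | heq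
      · have := ihA a h1 (by omega) hlt
        have hgc : gVec (BinaryTree.node u A B) (fVec A a + 1) = gVec A (fVec A a + 1) := by
          simp only [gVec]; rw [if_pos (by omega)]
        omega
      · have hgc : gVec (BinaryTree.node u A B) (fVec A a + 1) = 1 := by
          simp only [gVec]; rw [if_neg (by omega), if_pos (by omega)]
        omega
    · have hfa : fVec (BinaryTree.node u A B) a = p + (BinaryTree.numNodes B) := by
        simp only [fVec]; rw [if_neg (by omega), if_pos hap]
      omega
    · have hfa : fVec (BinaryTree.node u A B) a = p + fVec B (a - p) := by
        simp only [fVec]; rw [if_neg (by omega), if_neg (by omega)]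
      rw [hfa] at h3 ⊢
      have hlb : a - p ≤ fVec B (a - p) := fVec_lb B (a - p) (by omega) (by omega)
      have := ihB (a - p) (by omega) (by omega) (by omega)
      have hgc : gVec (BinaryTree.node u A B) (p + fVec B (a - p) + 1)
          = p + gVec B (p + fVec B (a - p) + 1 - p) := by
        simp only [gVec]; rw [if_neg (by omega), if_neg (by omega)]
      rw [hgc]
      have : p + fVec B (a - p) + 1 - p = fVec B (a - p) + 1 := by omega
      rw [this]
      omega

lemma decRelT_iff (T : BinaryTree Unit) :
    ∀ i j, decRelT T i j ↔ 1 ≤ j ∧ j < i ∧ i ≤ fVec T j := by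
  induction T with
  | nil =>
    intro i j
    simp only [decRelT, fVec, false_iff]
    omega
  | node u A B ihA ihB =>
    intro i j
    simp only [decRelT, fVec]
    rcases Nat.lt_trichotomy j ((BinaryTree.numNodes A) + 1) with hjp | hjp | hjp
    · rw [if_pos hjp, ihA, ihB]
      by_cases hj0 : j = 0
      · subst hj0; rw [fVec_zero]; omega
      · have hub : fVec A j ≤ (BinaryTree.numNodes A) := fVec_ub A j (by omega) (by omega)
        omega
    · rw [if_neg (by omega), if_pos hjp, ihA, ihB]
      omega
    · rw [if_neg (by omega), if_neg (by omega), ihA, ihB]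
      omega

lemma incRelT_iff (T : BinaryTree Unit) :
    ∀ i j, incRelT T i j ↔ 1 ≤ i ∧ i < j ∧ j ≤ (BinaryTree.numNodes T) ∧ gVec T j ≤ i := by
  induction T with
  | nil =>
    intro i j
    simp only [incRelT, BinaryTree.numNodes, false_iff]
    omega
  | node u A B ihA ihB =>
    intro i j
    simp only [incRelT, gVec, BinaryTree.numNodes]
    rcases Nat.lt_trichotomy j ((BinaryTree.numNodes A) + 1) with hjp | hjp | hjp
    · rw [if_pos hjp, ihA, ihB]
      omega
    · rw [if_neg (by omega), if_pos hjp, ihA, ihB]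
      omega
    · rw [if_neg (by omega), if_neg (by omega), ihA, ihB]
      have := gVec_pos B (j - ((BinaryTree.numNodes A) + 1))
      omega
lemma fVec_node_lt {u : Unit} {A B : BinaryTree Unit} {i : ℕ} (h : i < (BinaryTree.numNodes A) + 1) :
    fVec (BinaryTree.node u A B) i = fVec A i := by
  simp only [fVec]; rw [if_pos h]

lemma fVec_node_root {u : Unit} {A B : BinaryTree Unit} {i : ℕ} (h : i = (BinaryTree.numNodes A) + 1) :
    fVec (BinaryTree.node u A B) i = (BinaryTree.numNodes A) + 1 + (BinaryTree.numNodes B) := by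
  simp only [fVec]; rw [if_neg (by omega), if_pos h]

lemma fVec_node_gt {u : Unit} {A B : BinaryTree Unit} {i : ℕ} (h : (BinaryTree.numNodes A) + 1 < i) :
    fVec (BinaryTree.node u A B) i = (BinaryTree.numNodes A) + 1 + fVec B (i - ((BinaryTree.numNodes A) + 1)) := by
  simp only [fVec]; rw [if_neg (by omega), if_neg (by omega)]

lemma gVec_node_lt {u : Unit} {A B : BinaryTree Unit} {i : ℕ} (h : i < (BinaryTree.numNodes A) + 1) :
    gVec (BinaryTree.node u A B) i = gVec A i := by
  simp only [gVec]; rw [if_pos h]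

lemma gVec_node_root {u : Unit} {A B : BinaryTree Unit} {i : ℕ} (h : i = (BinaryTree.numNodes A) + 1) :
    gVec (BinaryTree.node u A B) i = 1 := by
  simp only [gVec]; rw [if_neg (by omega), if_pos h]

lemma gVec_node_gt {u : Unit} {A B : BinaryTree Unit} {i : ℕ} (h : (BinaryTree.numNodes A) + 1 < i) :
    gVec (BinaryTree.node u A B) i = (BinaryTree.numNodes A) + 1 + gVec B (i - ((BinaryTree.numNodes A) + 1)) := by
  simp only [gVec]; rw [if_neg (by omega), if_neg (by omega)]

lemma rightRot_numNodes {T T' : BinaryTree Unit} (h : RightRot T T') :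
    (BinaryTree.numNodes T) = (BinaryTree.numNodes T') := by
  induction h with
  | root A B C => simp only [BinaryTree.numNodes]; omega
  | left B _ ih => simp only [BinaryTree.numNodes]; omega
  | right A _ ih => simp only [BinaryTree.numNodes]; omega

lemma rightRot_fVec_le {T T' : BinaryTree Unit} (h : RightRot T T') :
    ∀ i, fVec T i ≤ fVec T' i := by
  induction h with
  | root A B C =>
    intro i
    rcases Nat.lt_trichotomy i ((BinaryTree.numNodes A) + 1) with h1 | h1 | h1
    · rw [fVec_node_lt (by simp only [BinaryTree.numNodes]; omega),
        fVec_node_lt h1, fVec_node_lt h1]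
    · rw [fVec_node_lt (by simp only [BinaryTree.numNodes]; omega),
        fVec_node_root h1, fVec_node_root (by simpa using h1)]
      simp only [BinaryTree.numNodes]; omega
    · rcases Nat.lt_trichotomy i ((BinaryTree.numNodes A) + (BinaryTree.numNodes B) + 2) with h2 | h2 | h2
      · rw [fVec_node_lt (by simp only [BinaryTree.numNodes]; omega),
          fVec_node_gt h1, fVec_node_gt h1,
          fVec_node_lt (show i - ((BinaryTree.numNodes A)+1) < (BinaryTree.numNodes B) + 1 by omega)]
      · rw [fVec_node_root (by simp only [BinaryTree.numNodes]; omega),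
          fVec_node_gt h1,
          fVec_node_root (show i - ((BinaryTree.numNodes A)+1) = (BinaryTree.numNodes B) + 1 by omega)]
        simp only [BinaryTree.numNodes]; omega
      · rw [fVec_node_gt (by simp only [BinaryTree.numNodes]; omega),
          fVec_node_gt h1,
          fVec_node_gt (show (BinaryTree.numNodes B) + 1 < i - ((BinaryTree.numNodes A)+1) by omega)]
        simp only [BinaryTree.numNodes]
        have : i - ((BinaryTree.numNodes A) + (BinaryTree.numNodes B) + 1 + 1)
            = i - ((BinaryTree.numNodes A) + 1) - ((BinaryTree.numNodes B) + 1) := by omega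
        rw [this]
        omega
  | @left A A' D hr ih =>
    intro i
    have hs : (BinaryTree.numNodes A) = (BinaryTree.numNodes A') := rightRot_numNodes hr
    rcases Nat.lt_trichotomy i ((BinaryTree.numNodes A) + 1) with h1 | h1 | h1
    · rw [fVec_node_lt h1, fVec_node_lt (by omega)]; exact ih i
    · rw [fVec_node_root h1, fVec_node_root (by omega)]; omega
    · rw [fVec_node_gt h1, fVec_node_gt (by omega)]; rw [hs]
  | @right D B B' hr ih =>
    intro i
    rcases Nat.lt_trichotomy i ((BinaryTree.numNodes D) + 1) with h1 | h1 | h1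
    · rw [fVec_node_lt h1, fVec_node_lt h1]
    · rw [fVec_node_root h1, fVec_node_root h1]
      have := rightRot_numNodes hr; omega
    · rw [fVec_node_gt h1, fVec_node_gt h1]
      have := ih (i - ((BinaryTree.numNodes D) + 1)); omega
lemma numNodes_eq_zero {T : BinaryTree Unit} (h : (BinaryTree.numNodes T) = 0) : T = BinaryTree.nil := by
  cases T with
  | nil => rfl
  | node u A B => simp only [BinaryTree.numNodes] at h; omega

lemma rot_exists (T : BinaryTree Unit) :
    ∀ x, 1 ≤ x → x ≤ (BinaryTree.numNodes T) → fVec T x + 1 ≤ (BinaryTree.numNodes T) →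
      (∀ a, 1 ≤ a → a < x → fVec T a ≠ fVec T x) →
      ∃ T', RightRot T T' ∧
        ∀ b, fVec T' b = if b = x then fVec T (fVec T x + 1) else fVec T b := by
  induction T with
  | nil =>
    intro x h1 h2 h3 h4
    simp only [BinaryTree.numNodes] at h2
    omega
  | node u A B ihA ihB =>
    intro x hx1 hx2 hc hleft
    simp only [BinaryTree.numNodes] at hx2 hc
    rcases Nat.lt_trichotomy x ((BinaryTree.numNodes A) + 1) with hxp | hxp | hxp
    · -- x in the left subtree A
      have hfx : fVec (BinaryTree.node u A B) x = fVec A x := fVec_node_lt hxp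
      have hub : fVec A x ≤ (BinaryTree.numNodes A) := fVec_ub A x hx1 (by omega)
      rcases lt_or_eq_of_le hub with hlt | heq
      · -- rotation happens inside A
        obtain ⟨A', hrA, hA'⟩ := ihA x hx1 (by omega) (by omega) (by
          intro a ha1 hax
          have e1 : fVec (BinaryTree.node u A B) a = fVec A a := fVec_node_lt (by omega)
          have := hleft a ha1 hax
          rw [e1, hfx] at this
          exact this)
        have hsz : (BinaryTree.numNodes A) = (BinaryTree.numNodes A') := rightRot_numNodes hrA
        refine ⟨node u A' B, RightRot.left B hrA, ?_⟩
        intro b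
        rcases Nat.lt_trichotomy b ((BinaryTree.numNodes A) + 1) with hbp | hbp | hbp
        · rw [fVec_node_lt (show b < (BinaryTree.numNodes A') + 1 by omega), hA' b, hfx]
          by_cases hbx : b = x
          · rw [if_pos hbx, if_pos hbx,
              fVec_node_lt (show fVec A x + 1 < (BinaryTree.numNodes A) + 1 by omega)]
          · rw [if_neg hbx, if_neg hbx, fVec_node_lt hbp]
        · rw [fVec_node_root (by omega), fVec_node_root hbp, if_neg (by omega), hsz]
        · rw [fVec_node_gt (by omega), fVec_node_gt hbp, if_neg (by omega), hsz]
      · -- x is the root of A : rotate at the root of the whole tree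
        obtain ⟨v, A1, B1, hA⟩ : ∃ v A1 B1, A = BinaryTree.node v A1 B1 := by
          cases A with
          | nil => simp only [BinaryTree.numNodes] at hxp; omega
          | node v A1 B1 => exact ⟨v, A1, B1, rfl⟩
        subst hA
        have hnA : (BinaryTree.node v A1 B1).numNodes = (BinaryTree.numNodes A1) + (BinaryTree.numNodes B1) + 1 := rfl
        -- identify x with the root of A
        have hxroot : x = (BinaryTree.numNodes A1) + 1 := by
          rcases Nat.lt_trichotomy x ((BinaryTree.numNodes A1) + 1) with h1 | h1 | h1
          · exfalso
            have e1 : fVec (BinaryTree.node v A1 B1) x = fVec A1 x := fVec_node_lt h1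
            have := fVec_ub A1 x hx1 (by omega)
            omega
          · exact h1
          · exfalso
            have e1 : fVec (BinaryTree.node v A1 B1) ((BinaryTree.numNodes A1) + 1)
                = (BinaryTree.numNodes A1) + 1 + (BinaryTree.numNodes B1) := fVec_node_root rfl
            have e2 : fVec (BinaryTree.node u (BinaryTree.node v A1 B1) B) ((BinaryTree.numNodes A1) + 1)
                = fVec (BinaryTree.node v A1 B1) ((BinaryTree.numNodes A1) + 1) := fVec_node_lt (by omega)
            have := hleft ((BinaryTree.numNodes A1) + 1) (by omega) h1
            rw [e2, e1, hfx, heq] at this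
            simp only [BinaryTree.numNodes] at this
            omega
        -- the rotated tree
        obtain rfl : u = () := rfl
        obtain rfl : v = () := rfl
        refine ⟨node () A1 (BinaryTree.node () B1 B), RightRot.root A1 B1 B, ?_⟩
        have hcval : fVec (BinaryTree.node () (BinaryTree.node () A1 B1) B) (fVec (BinaryTree.node () (BinaryTree.node () A1 B1) B) x + 1)
            = (BinaryTree.numNodes A1) + (BinaryTree.numNodes B1) + 1 + 1 + (BinaryTree.numNodes B) := by
          rw [hfx, heq, hnA]
          exact fVec_node_root (by simp only [BinaryTree.numNodes])
        intro b
        rw [hcval]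
        rcases Nat.lt_trichotomy b ((BinaryTree.numNodes A1) + 1) with hb1 | hb1 | hb1
        · rw [fVec_node_lt hb1, if_neg (by omega),
            fVec_node_lt (show b < (BinaryTree.node () A1 B1).numNodes + 1 by rw [hnA]; omega),
            fVec_node_lt hb1]
        · rw [fVec_node_root hb1, if_pos (by omega)]
          simp only [BinaryTree.numNodes]
          omega
        · rcases Nat.lt_trichotomy b ((BinaryTree.numNodes A1) + (BinaryTree.numNodes B1) + 2) with hb2 | hb2 | hb2
          · rw [fVec_node_gt hb1, if_neg (by omega),
              fVec_node_lt (show b < (BinaryTree.node () A1 B1).numNodes + 1 by rw [hnA]; omega),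
              fVec_node_gt hb1,
              fVec_node_lt (show b - ((BinaryTree.numNodes A1) + 1) < (BinaryTree.numNodes B1) + 1 by omega)]
          · rw [fVec_node_gt hb1, if_neg (by omega),
              fVec_node_root (show b = (BinaryTree.node () A1 B1).numNodes + 1 by rw [hnA]; omega),
              fVec_node_root (show b - ((BinaryTree.numNodes A1) + 1) = (BinaryTree.numNodes B1) + 1 by omega)]
            rw [hnA]
            omega
          · rw [fVec_node_gt hb1, if_neg (by omega),
              fVec_node_gt (show (BinaryTree.node () A1 B1).numNodes + 1 < b by rw [hnA]; omega),
              fVec_node_gt (show (BinaryTree.numNodes B1) + 1 < b - ((BinaryTree.numNodes A1) + 1) by omega)]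
            rw [hnA]
            have : b - ((BinaryTree.numNodes A1) + (BinaryTree.numNodes B1) + 1 + 1)
                = b - ((BinaryTree.numNodes A1) + 1) - ((BinaryTree.numNodes B1) + 1) := by omega
            rw [this]
            omega
    · -- x is the root: impossible
      have : fVec (BinaryTree.node u A B) x = (BinaryTree.numNodes A) + 1 + (BinaryTree.numNodes B) := fVec_node_root hxp
      omega
    · -- x in the right subtree B
      have hfx : fVec (BinaryTree.node u A B) x = (BinaryTree.numNodes A) + 1 + fVec B (x - ((BinaryTree.numNodes A) + 1)) :=
        fVec_node_gt hxp
      have hlbB : x - ((BinaryTree.numNodes A) + 1) ≤ fVec B (x - ((BinaryTree.numNodes A) + 1)) :=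
        fVec_lb B _ (by omega) (by omega)
      obtain ⟨B', hrB, hB'⟩ := ihB (x - ((BinaryTree.numNodes A) + 1)) (by omega) (by omega)
        (by omega) (by
          intro a ha1 hax
          have e1 : fVec (BinaryTree.node u A B) (a + ((BinaryTree.numNodes A) + 1))
              = (BinaryTree.numNodes A) + 1 + fVec B a := by
            rw [fVec_node_gt (by omega)]
            congr 2
            omega
          have := hleft (a + ((BinaryTree.numNodes A) + 1)) (by omega) (by omega)
          rw [e1, hfx] at this
          omega)
      have hsz : (BinaryTree.numNodes B) = (BinaryTree.numNodes B') := rightRot_numNodes hrB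
      refine ⟨node u A B', RightRot.right A hrB, ?_⟩
      intro b
      rcases Nat.lt_trichotomy b ((BinaryTree.numNodes A) + 1) with hbp | hbp | hbp
      · rw [fVec_node_lt hbp, fVec_node_lt hbp, if_neg (by omega)]
      · rw [fVec_node_root hbp, fVec_node_root hbp, if_neg (by omega), hsz]
      · rw [fVec_node_gt hbp, hB' (b - ((BinaryTree.numNodes A) + 1)), hfx]
        by_cases hbx : b = x
        · rw [if_pos (show b - ((BinaryTree.numNodes A) + 1) = x - ((BinaryTree.numNodes A) + 1) by omega),
            if_pos hbx,
            fVec_node_gt (show (BinaryTree.numNodes A) + 1 < (BinaryTree.numNodes A) + 1 + fVec B (x - ((BinaryTree.numNodes A) + 1)) + 1 by omega)]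
          have : (BinaryTree.numNodes A) + 1 + fVec B (x - ((BinaryTree.numNodes A) + 1)) + 1 - ((BinaryTree.numNodes A) + 1)
              = fVec B (x - ((BinaryTree.numNodes A) + 1)) + 1 := by omega
          rw [this]
        · rw [if_neg (show ¬ (b - ((BinaryTree.numNodes A) + 1) = x - ((BinaryTree.numNodes A) + 1)) by omega),
            if_neg hbx, fVec_node_gt hbp]
lemma tamariLE_fVec_le {T U : BinaryTree Unit} (h : tamariLE T U) :
    (BinaryTree.numNodes T) = (BinaryTree.numNodes U) ∧ ∀ i, fVec T i ≤ fVec U i := by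
  induction h with
  | refl => exact ⟨rfl, fun i => le_rfl⟩
  | tail h1 h2 ih =>
    exact ⟨ih.1.trans (rightRot_numNodes h2),
      fun i => (ih.2 i).trans (rightRot_fVec_le h2 i)⟩

lemma fVec_inj : ∀ T U : BinaryTree Unit, (BinaryTree.numNodes T) = (BinaryTree.numNodes U) →
    (∀ a, 1 ≤ a → a ≤ (BinaryTree.numNodes T) → fVec T a = fVec U a) → T = U := by
  intro T
  induction T with
  | nil =>
    intro U hm _
    exact (numNodes_eq_zero (by simp only [BinaryTree.numNodes] at hm; omega)).symm
  | node u A B ihA ihB =>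
    intro U hm hf
    cases U with
    | nil => simp only [BinaryTree.numNodes] at hm; omega
    | node v A' B' =>
      simp only [BinaryTree.numNodes] at hm
      obtain rfl : u = () := rfl
      obtain rfl : v = () := rfl
      have hroot : (BinaryTree.numNodes A) = (BinaryTree.numNodes A') := by
        rcases Nat.lt_trichotomy (BinaryTree.numNodes A) (BinaryTree.numNodes A') with h1 | h1 | h1
        · exfalso
          have e1 : fVec (BinaryTree.node () A B) ((BinaryTree.numNodes A) + 1)
              = (BinaryTree.numNodes A) + 1 + (BinaryTree.numNodes B) := fVec_node_root rfl
          have e2 : fVec (BinaryTree.node () A' B') ((BinaryTree.numNodes A) + 1)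
              = fVec A' ((BinaryTree.numNodes A) + 1) := fVec_node_lt (by omega)
          have e3 := fVec_ub A' ((BinaryTree.numNodes A) + 1) (by omega) (by omega)
          have := hf ((BinaryTree.numNodes A) + 1) (by omega) (by simp only [BinaryTree.numNodes]; omega)
          omega
        · exact h1
        · exfalso
          have e1 : fVec (BinaryTree.node () A' B') ((BinaryTree.numNodes A') + 1)
              = (BinaryTree.numNodes A') + 1 + (BinaryTree.numNodes B') := fVec_node_root rfl
          have e2 : fVec (BinaryTree.node () A B) ((BinaryTree.numNodes A') + 1)
              = fVec A ((BinaryTree.numNodes A') + 1) := fVec_node_lt (by omega)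
          have e3 := fVec_ub A ((BinaryTree.numNodes A') + 1) (by omega) (by omega)
          have := hf ((BinaryTree.numNodes A') + 1) (by omega) (by simp only [BinaryTree.numNodes]; omega)
          omega
      have hA : A = A' := by
        apply ihA A' hroot
        intro a ha1 ha2
        have e1 : fVec (BinaryTree.node () A B) a = fVec A a := fVec_node_lt (by omega)
        have e2 : fVec (BinaryTree.node () A' B') a = fVec A' a := fVec_node_lt (by omega)
        have := hf a ha1 (by simp only [BinaryTree.numNodes]; omega)
        omega
      have hB : B = B' := by
        apply ihB B' (by omega)
        intro b hb1 hb2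
        have e1 : fVec (BinaryTree.node () A B) (b + ((BinaryTree.numNodes A) + 1))
            = (BinaryTree.numNodes A) + 1 + fVec B b := by
          rw [fVec_node_gt (by omega)]; congr 2; omega
        have e2 : fVec (BinaryTree.node () A' B') (b + ((BinaryTree.numNodes A) + 1))
            = (BinaryTree.numNodes A) + 1 + fVec B' b := by
          rw [hroot] at e1 ⊢
          rw [fVec_node_gt (by omega)]; congr 2; omega
        have := hf (b + ((BinaryTree.numNodes A) + 1)) (by omega) (by simp only [BinaryTree.numNodes]; omega)
        omega
      rw [hA, hB]

lemma gVec_inj : ∀ T U : BinaryTree Unit, (BinaryTree.numNodes T) = (BinaryTree.numNodes U) →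
    (∀ a, 1 ≤ a → a ≤ (BinaryTree.numNodes T) → gVec T a = gVec U a) → T = U := by
  intro T
  induction T with
  | nil =>
    intro U hm _
    exact (numNodes_eq_zero (by simp only [BinaryTree.numNodes] at hm; omega)).symm
  | node u A B ihA ihB =>
    intro U hm hf
    cases U with
    | nil => simp only [BinaryTree.numNodes] at hm; omega
    | node v A' B' =>
      simp only [BinaryTree.numNodes] at hm
      obtain rfl : u = () := rfl
      obtain rfl : v = () := rfl
      have hroot : (BinaryTree.numNodes A) = (BinaryTree.numNodes A') := by
        rcases Nat.lt_trichotomy (BinaryTree.numNodes A) (BinaryTree.numNodes A') with h1 | h1 | h1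
        · exfalso
          have e1 : gVec (BinaryTree.node () A' B') ((BinaryTree.numNodes A') + 1) = 1 := gVec_node_root rfl
          have e2 : gVec (BinaryTree.node () A B) ((BinaryTree.numNodes A') + 1)
              = (BinaryTree.numNodes A) + 1 + gVec B ((BinaryTree.numNodes A') + 1 - ((BinaryTree.numNodes A) + 1)) :=
            gVec_node_gt (by omega)
          have := hf ((BinaryTree.numNodes A') + 1) (by omega) (by simp only [BinaryTree.numNodes]; omega)
          have := gVec_pos B ((BinaryTree.numNodes A') + 1 - ((BinaryTree.numNodes A) + 1))
          omega
        · exact h1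
        · exfalso
          have e1 : gVec (BinaryTree.node () A B) ((BinaryTree.numNodes A) + 1) = 1 := gVec_node_root rfl
          have e2 : gVec (BinaryTree.node () A' B') ((BinaryTree.numNodes A) + 1)
              = (BinaryTree.numNodes A') + 1 + gVec B' ((BinaryTree.numNodes A) + 1 - ((BinaryTree.numNodes A') + 1)) :=
            gVec_node_gt (by omega)
          have := hf ((BinaryTree.numNodes A) + 1) (by omega) (by simp only [BinaryTree.numNodes]; omega)
          have := gVec_pos B' ((BinaryTree.numNodes A) + 1 - ((BinaryTree.numNodes A') + 1))
          omega
      have hA : A = A' := by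
        apply ihA A' hroot
        intro a ha1 ha2
        have e1 : gVec (BinaryTree.node () A B) a = gVec A a := gVec_node_lt (by omega)
        have e2 : gVec (BinaryTree.node () A' B') a = gVec A' a := gVec_node_lt (by omega)
        have := hf a ha1 (by simp only [BinaryTree.numNodes]; omega)
        omega
      have hB : B = B' := by
        apply ihB B' (by omega)
        intro b hb1 hb2
        have e1 : gVec (BinaryTree.node () A B) (b + ((BinaryTree.numNodes A) + 1))
            = (BinaryTree.numNodes A) + 1 + gVec B b := by
          rw [gVec_node_gt (by omega)]; congr 2; omega
        have e2 : gVec (BinaryTree.node () A' B') (b + ((BinaryTree.numNodes A) + 1))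
            = (BinaryTree.numNodes A) + 1 + gVec B' b := by
          rw [hroot] at e1 ⊢
          rw [gVec_node_gt (by omega)]; congr 2; omega
        have := hf (b + ((BinaryTree.numNodes A) + 1)) (by omega) (by simp only [BinaryTree.numNodes]; omega)
        omega
      rw [hA, hB]
lemma tree_of_fVec : ∀ m : ℕ, ∀ f : ℕ → ℕ,
    (∀ a, 1 ≤ a → a ≤ m → a ≤ f a ∧ f a ≤ m) →
    (∀ a, m < a → f a = a) →
    (∀ a b, 1 ≤ a → a < b → b ≤ f a → f b ≤ f a) →
    ∃ T : BinaryTree Unit, (BinaryTree.numNodes T) = m ∧ ∀ a, 1 ≤ a → a ≤ m → fVec T a = f a := by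
  intro m
  induction m using Nat.strong_induction_on with
  | _ m ih =>
    intro f hb hout hv
    rcases Nat.eq_zero_or_pos m with hm | hm
    · exact ⟨BinaryTree.nil, by simp only [BinaryTree.numNodes]; omega, fun a h1 h2 => by omega⟩
    · have hex : ∃ a, 1 ≤ a ∧ a ≤ m ∧ f a = m := by
        refine ⟨m, hm, le_rfl, ?_⟩
        have := hb m hm le_rfl; omega
      set p := Nat.find hex with hpdef
      obtain ⟨hp1, hpm, hfp⟩ : 1 ≤ p ∧ p ≤ m ∧ f p = m := Nat.find_spec hex
      have hmin : ∀ a, a < p → ¬(1 ≤ a ∧ a ≤ m ∧ f a = m) := fun a ha => Nat.find_min hex ha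
      clear_value p
      have hleft : ∀ a, 1 ≤ a → a < p → f a < p := by
        intro a h1 h2
        by_contra hcon
        push_neg at hcon
        have h3 := hv a p h1 h2 hcon
        have h4 := hb a h1 (by omega)
        exact hmin a h2 ⟨h1, by omega, by omega⟩
      obtain ⟨A, hAn, hAf⟩ := ih (p - 1) (by omega)
        (fun a => if a ≤ p - 1 then f a else a)
        (by
          intro a h1 h2
          rw [if_pos h2]
          have := hleft a h1 (by omega)
          have := hb a h1 (by omega)
          omega)
        (by intro a h1; rw [if_neg (by omega)])
        (by
          intro a b h1 h2 h3
          by_cases ha : a ≤ p - 1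
          · rw [if_pos ha] at h3
            have hfa := hleft a h1 (by omega)
            rw [if_pos ha, if_pos (by omega)]
            exact hv a b h1 h2 h3
          · rw [if_neg ha] at h3; omega)
      obtain ⟨B, hBn, hBf⟩ := ih (m - p) (by omega)
        (fun b => if b ≤ m - p then f (b + p) - p else b)
        (by
          intro b h1 h2
          rw [if_pos h2]
          have := hb (b + p) (by omega) (by omega)
          omega)
        (by intro a h1; rw [if_neg (by omega)])
        (by
          intro a b h1 h2 h3
          by_cases ha : a ≤ m - p
          · rw [if_pos ha] at h3
            have hba := hb (a + p) (by omega) (by omega)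
            have hvv := hv (a + p) (b + p) (by omega) (by omega) (by omega)
            rw [if_pos ha]
            by_cases hbr : b ≤ m - p
            · rw [if_pos hbr]; omega
            · rw [if_neg hbr]
              have := hout (b + p) (by omega)
              omega
          · rw [if_neg ha] at h3; omega)
      refine ⟨node () A B, by simp only [BinaryTree.numNodes]; omega, ?_⟩
      intro a h1 h2
      rcases Nat.lt_trichotomy a ((BinaryTree.numNodes A) + 1) with hap | hap | hap
      · rw [fVec_node_lt hap]
        have := hAf a h1 (by omega)
        rw [if_pos (by omega)] at this
        exact this
      · rw [fVec_node_root hap]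
        have hap2 : a = p := by omega
        rw [hap2, hfp]
        omega
      · rw [fVec_node_gt hap]
        have e1 := hBf (a - ((BinaryTree.numNodes A) + 1)) (by omega) (by omega)
        rw [if_pos (by omega)] at e1
        have e2 : (a - ((BinaryTree.numNodes A) + 1)) + p = a := by omega
        rw [e2] at e1
        have := hb a h1 h2
        omega

lemma tree_of_gVec : ∀ m : ℕ, ∀ g : ℕ → ℕ,
    (∀ a, 1 ≤ a → a ≤ m → 1 ≤ g a ∧ g a ≤ a) →
    (∀ a, m < a → g a = a) →
    (∀ b c, b < c → g c ≤ b → g c ≤ g b) →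
    ∃ T : BinaryTree Unit, (BinaryTree.numNodes T) = m ∧ ∀ a, 1 ≤ a → a ≤ m → gVec T a = g a := by
  intro m
  induction m using Nat.strong_induction_on with
  | _ m ih =>
    intro g hb hout hv
    rcases Nat.eq_zero_or_pos m with hm | hm
    · exact ⟨BinaryTree.nil, by simp only [BinaryTree.numNodes]; omega, fun a h1 h2 => by omega⟩
    · have hg1 : g 1 = 1 := by have := hb 1 le_rfl hm; omega
      set p := Nat.findGreatest (fun a => 1 ≤ a ∧ g a = 1) m with hpdef
      have hp1 : 1 ≤ p ∧ g p = 1 :=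
        Nat.findGreatest_spec (P := fun a => 1 ≤ a ∧ g a = 1) (show 1 ≤ m from hm)
          ⟨le_rfl, hg1⟩
      have hpm : p ≤ m := Nat.findGreatest_le m
      have hgtr : ∀ c, p < c → c ≤ m → ¬(1 ≤ c ∧ g c = 1) := by
        intro c h1 h2
        exact Nat.findGreatest_is_greatest h1 h2
      clear_value p
      have hright : ∀ c, p < c → c ≤ m → p < g c := by
        intro c h1 h2
        by_contra hcon
        push_neg at hcon
        have h3 := hv p c h1 hcon
        rw [hp1.2] at h3
        have := hb c (by omega) h2
        exact hgtr c h1 h2 ⟨by omega, by omega⟩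
      obtain ⟨A, hAn, hAg⟩ := ih (p - 1) (by omega)
        (fun a => if a ≤ p - 1 then g a else a)
        (by
          intro a h1 h2
          rw [if_pos h2]
          exact hb a h1 (by omega))
        (by intro a h1; rw [if_neg (by omega)])
        (by
          intro b c h1 h3
          by_cases hc : c ≤ p - 1
          · rw [if_pos hc] at h3
            rw [if_pos hc]
            have hgc := hv b c h1 h3
            by_cases hbr : b ≤ p - 1
            · rw [if_pos hbr]; omega
            · omega
          · rw [if_neg hc] at h3; omega)
      obtain ⟨B, hBn, hBg⟩ := ih (m - p) (by omega)
        (fun b => if b ≤ m - p then g (b + p) - p else b)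
        (by
          intro a h1 h2
          rw [if_pos h2]
          have := hb (a + p) (by omega) (by omega)
          have := hright (a + p) (by omega) (by omega)
          omega)
        (by intro a h1; rw [if_neg (by omega)])
        (by
          intro b c h1 h3
          by_cases hc : c ≤ m - p
          · rw [if_pos hc] at h3
            have hgc := hright (c + p) (by omega) (by omega)
            rcases Nat.eq_zero_or_pos b with hb0 | hb0
            · omega
            · have hvv := hv (b + p) (c + p) (by omega) (by omega)
              rw [if_pos hc]
              by_cases hbr : b ≤ m - p
              · rw [if_pos hbr]
                have := hright (b + p) (by omega) (by omega)
                omega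
              · rw [if_neg hbr]
                have hgb := hb (b + p) (by omega) (by omega)
                omega
          · rw [if_neg hc] at h3; omega)
      refine ⟨node () A B, by simp only [BinaryTree.numNodes]; omega, ?_⟩
      intro a h1 h2
      rcases Nat.lt_trichotomy a ((BinaryTree.numNodes A) + 1) with hap | hap | hap
      · rw [gVec_node_lt hap]
        have := hAg a h1 (by omega)
        rw [if_pos (by omega)] at this
        exact this
      · rw [gVec_node_root hap]
        have hap2 : a = p := by omega
        rw [hap2, hp1.2]
      · rw [gVec_node_gt hap]
        have e1 := hBg (a - ((BinaryTree.numNodes A) + 1)) (by omega) (by omega)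
        rw [if_pos (by omega)] at e1
        have e2 : (a - ((BinaryTree.numNodes A) + 1)) + p = a := by omega
        rw [e2] at e1
        have := hright a (by omega) h2
        omega

lemma le_fVec_tamari : ∀ N : ℕ, ∀ T U : BinaryTree Unit, (BinaryTree.numNodes T) = (BinaryTree.numNodes U) →
    (∀ a, 1 ≤ a → a ≤ (BinaryTree.numNodes T) → fVec T a ≤ fVec U a) →
    (∑ a ∈ Finset.Icc 1 (BinaryTree.numNodes T), (fVec U a - fVec T a)) ≤ N →
    tamariLE T U := by
  intro N
  induction N with
  | zero =>
    intro T U hm hle hsum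
    have hz0 : (∑ a ∈ Finset.Icc 1 (BinaryTree.numNodes T), (fVec U a - fVec T a)) = 0 :=
      Nat.le_zero.mp hsum
    have hzz := Finset.sum_eq_zero_iff.mp hz0
    have heq : T = U := by
      apply fVec_inj T U hm
      intro a h1 h2
      have := hzz a (Finset.mem_Icc.mpr ⟨h1, h2⟩)
      have := hle a h1 h2
      omega
    rw [heq]
    exact Relation.ReflTransGen.refl
  | succ N ihN =>
    intro T U hm hle hsum
    by_cases hall : ∀ a, 1 ≤ a → a ≤ (BinaryTree.numNodes T) → fVec T a = fVec U a
    · rw [fVec_inj T U hm hall]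
      exact Relation.ReflTransGen.refl
    · push_neg at hall
      have hex : ∃ a, 1 ≤ a ∧ a ≤ (BinaryTree.numNodes T) ∧ fVec T a < fVec U a := by
        obtain ⟨a, h1, h2, h3⟩ := hall
        exact ⟨a, h1, h2, lt_of_le_of_ne (hle a h1 h2) h3⟩
      let x := Nat.find hex
      obtain ⟨hx1, hx2, hx3⟩ : 1 ≤ x ∧ x ≤ (BinaryTree.numNodes T) ∧ fVec T x < fVec U x :=
        Nat.find_spec hex
      have hmin : ∀ a, a < x → ¬(1 ≤ a ∧ a ≤ (BinaryTree.numNodes T) ∧ fVec T a < fVec U a) :=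
        fun a ha => Nat.find_min hex ha
      have hUub : fVec U x ≤ (BinaryTree.numNodes T) := by
        rw [hm]; exact fVec_ub U x hx1 (by omega)
      obtain ⟨T', hrot, hT'⟩ := rot_exists T x hx1 hx2 (by omega) (by
        intro a ha1 hax heqa
        have hTa : fVec T a = fVec U a := by
          have h2 : a ≤ (BinaryTree.numNodes T) := by omega
          have := hmin a hax
          have := hle a ha1 h2
          omega
        have hvx : x ≤ fVec T x := fVec_lb T x hx1 hx2
        have : fVec U x ≤ fVec U a := fVec_valid U a x hax (by omega)
        omega)
      have hT'm : (BinaryTree.numNodes T') = (BinaryTree.numNodes T) := (rightRot_numNodes hrot).symm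
      set c := fVec T x + 1 with hcdef
      have hcm : c ≤ (BinaryTree.numNodes T) := by omega
      have hTc_lb : c ≤ fVec T c := fVec_lb T c (by omega) hcm
      have hTc_le : fVec T c ≤ fVec U c := hle c (by omega) hcm
      have hUc : fVec U c ≤ fVec U x := by
        apply fVec_valid U x c
        · have := fVec_lb T x hx1 hx2; omega
        · omega
      have hle' : ∀ a, 1 ≤ a → a ≤ (BinaryTree.numNodes T) → fVec T' a ≤ fVec U a := by
        intro a h1 h2
        rw [hT' a]
        by_cases hax : a = x
        · rw [if_pos hax, hax]; omega
        · rw [if_neg hax]; exact hle a h1 h2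
      have hstep : ∀ a, 1 ≤ a → a ≤ (BinaryTree.numNodes T) → fVec T a ≤ fVec T' a := by
        intro a h1 h2
        rw [hT' a]
        by_cases hax : a = x
        · rw [if_pos hax, hax]; omega
        · rw [if_neg hax]
      have hsum' : (∑ a ∈ Finset.Icc 1 (BinaryTree.numNodes T'), (fVec U a - fVec T' a)) ≤ N := by
        rw [hT'm]
        have hlt : (∑ a ∈ Finset.Icc 1 (BinaryTree.numNodes T), (fVec U a - fVec T' a))
            < (∑ a ∈ Finset.Icc 1 (BinaryTree.numNodes T), (fVec U a - fVec T a)) := by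
          apply Finset.sum_lt_sum
          · intro i hi
            rw [Finset.mem_Icc] at hi
            have := hstep i hi.1 hi.2
            omega
          · refine ⟨x, Finset.mem_Icc.mpr ⟨hx1, hx2⟩, ?_⟩
            rw [hT' x, if_pos rfl]
            omega
        omega
      exact Relation.ReflTransGen.head hrot
        (ihN T' U (by omega) (by rw [hT'm]; exact hle') hsum')
section Glue

variable {n : ℕ} {T1 T2 : BinaryTree Unit}

/-- Closed form for the reflexive-transitive closure of the union of the two
tree relations, when `fVec T1 ≤ fVec T2` (i.e. `T1 ≤ T2` in the Tamari order). -/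
lemma closure_eq_R (h1 : (BinaryTree.numNodes T1) = n) (h2 : (BinaryTree.numNodes T2) = n)
    (hle : ∀ a, 1 ≤ a → a ≤ n → fVec T1 a ≤ fVec T2 a) (x z : Fin n) :
    Relation.ReflTransGen
      (fun x y : Fin n => decRelT T1 (x.1+1) (y.1+1) ∨ incRelT T2 (x.1+1) (y.1+1)) x z ↔
    (x = z ∨ (z.1 < x.1 ∧ x.1 + 1 ≤ fVec T1 (z.1+1)) ∨
      (x.1 < z.1 ∧ gVec T2 (z.1+1) ≤ x.1 + 1)) := by
  constructor
  · intro hcl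
    induction hcl with
    | refl => exact Or.inl rfl
    | @tail y z hxy hstep ih =>
      have hstep' : (z.1 < y.1 ∧ y.1 + 1 ≤ fVec T1 (z.1+1)) ∨
          (y.1 < z.1 ∧ gVec T2 (z.1+1) ≤ y.1 + 1) := by
        rcases hstep with hd | hi
        · have := (decRelT_iff T1 (y.1+1) (z.1+1)).mp hd
          exact Or.inl ⟨by omega, this.2.2⟩
        · have := (incRelT_iff T2 (y.1+1) (z.1+1)).mp hi
          exact Or.inr ⟨by omega, this.2.2.2⟩
      rcases ih with rfl | ⟨hyx, hdx⟩ | ⟨hxy', hix⟩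
      · -- x = y
        rcases hstep' with ⟨h1', h2'⟩ | ⟨h1', h2'⟩
        · exact Or.inr (Or.inl ⟨h1', h2'⟩)
        · exact Or.inr (Or.inr ⟨h1', h2'⟩)
      · -- dec-type x y
        rcases hstep' with ⟨h1', h2'⟩ | ⟨h1', h2'⟩
        · -- dec step
          refine Or.inr (Or.inl ⟨by omega, ?_⟩)
          have := fVec_valid T1 (z.1+1) (y.1+1) (by omega) h2'
          omega
        · -- inc step
          rcases Nat.lt_trichotomy x.1 z.1 with hxz | hxz | hxz
          · exact Or.inr (Or.inr ⟨hxz, by omega⟩)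
          · exact Or.inl (Fin.ext hxz)
          · exfalso
            have hf2 : fVec T1 (y.1+1) ≤ fVec T2 (y.1+1) :=
              hle (y.1+1) (by omega) (by omega)
            have := gVec_gt_of_le_fVec T2 (y.1+1) (z.1+1) (by omega) (by omega)
            omega
      · -- inc-type x y
        rcases hstep' with ⟨h1', h2'⟩ | ⟨h1', h2'⟩
        · -- dec step
          rcases Nat.lt_trichotomy x.1 z.1 with hxz | hxz | hxz
          · exfalso
            have hf2 : fVec T1 (z.1+1) ≤ fVec T2 (z.1+1) :=
              hle (z.1+1) (by omega) (by omega)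
            have := gVec_gt_of_le_fVec T2 (z.1+1) (y.1+1) (by omega) (by omega)
            omega
          · exact Or.inl (Fin.ext hxz)
          · exact Or.inr (Or.inl ⟨hxz, by omega⟩)
        · -- inc step
          refine Or.inr (Or.inr ⟨by omega, ?_⟩)
          have := gVec_valid T2 (y.1+1) (z.1+1) (by omega) (by omega) h2'
          omega
  · intro hR
    rcases hR with rfl | ⟨hzx, hdx⟩ | ⟨hxz, hix⟩
    · exact Relation.ReflTransGen.refl
    · exact Relation.ReflTransGen.single
        (Or.inl ((decRelT_iff T1 (x.1+1) (z.1+1)).mpr ⟨by omega, by omega, hdx⟩))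
    · exact Relation.ReflTransGen.single
        (Or.inr ((incRelT_iff T2 (x.1+1) (z.1+1)).mpr ⟨by omega, by omega, by omega, hix⟩))

/-- The closed-form relation is an interval relation. -/
lemma R_interval (h1 : (BinaryTree.numNodes T1) = n) (h2 : (BinaryTree.numNodes T2) = n)
    (hle : ∀ a, 1 ≤ a → a ≤ n → fVec T1 a ≤ fVec T2 a) :
    IsIntervalRel n (fun x z : Fin n =>
      x = z ∨ (z.1 < x.1 ∧ x.1 + 1 ≤ fVec T1 (z.1+1)) ∨
        (x.1 < z.1 ∧ gVec T2 (z.1+1) ≤ x.1 + 1)) := by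
  refine ⟨fun a => Or.inl rfl, ?_, ?_, ?_, ?_⟩
  · -- antisymmetry
    intro a b hab hba
    rcases hab with rfl | ⟨h1', h2'⟩ | ⟨h1', h2'⟩
    · rfl
    · rcases hba with heq | ⟨h3', h4'⟩ | ⟨h3', h4'⟩
      · exact heq.symm
      · omega
      · exfalso
        have hf2 : fVec T1 (b.1+1) ≤ fVec T2 (b.1+1) := hle (b.1+1) (by omega) (by omega)
        have := gVec_gt_of_le_fVec T2 (b.1+1) (a.1+1) (by omega) (by omega)
        omega
    · rcases hba with heq | ⟨h3', h4'⟩ | ⟨h3', h4'⟩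
      · exact heq.symm
      · exfalso
        have hf2 : fVec T1 (a.1+1) ≤ fVec T2 (a.1+1) := hle (a.1+1) (by omega) (by omega)
        have := gVec_gt_of_le_fVec T2 (a.1+1) (b.1+1) (by omega) (by omega)
        omega
      · omega
  · -- transitivity, via the closure characterization
    intro a b c hab hbc
    rw [← closure_eq_R h1 h2 hle] at hab hbc ⊢
    exact hab.trans hbc
  · -- interval condition 1
    intro a b c hab hbc hac
    rcases hac with heq | ⟨h1', h2'⟩ | ⟨h1', h2'⟩
    · exfalso; rw [heq] at hab; exact absurd (hab.trans hbc) (lt_irrefl c)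
    · exfalso; rw [Fin.lt_def] at hab hbc; omega
    · rw [Fin.lt_def] at hab hbc
      exact Or.inr (Or.inr ⟨hbc, by omega⟩)
  · -- interval condition 2
    intro a b c hab hbc hca
    rcases hca with heq | ⟨h1', h2'⟩ | ⟨h1', h2'⟩
    · exfalso; rw [← heq] at hab; exact absurd (hab.trans hbc) (lt_irrefl c)
    · rw [Fin.lt_def] at hab hbc
      exact Or.inr (Or.inl ⟨hab, by omega⟩)
    · exfalso; rw [Fin.lt_def] at hab hbc; omega

end Glue
/-- A finite poset on `{1,…,n}` is an interval-poset (arises from a Tamari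
interval, as the poset generated by the decreasing relations of the lower tree
and the increasing relations of the upper tree) if and only if for all
`a < b < c`: `a ≺ c` implies `b ≺ c`, and `c ≺ a` implies `b ≺ a`; moreover the
correspondence with Tamari intervals is bijective. -/
theorem interval_poset_characterization (n : ℕ) (r : Fin n → Fin n → Prop) :
    IsIntervalRel n r ↔
      ∃! p : Tree Unit × Tree Unit,
        p.1.numNodes = n ∧ p.2.numNodes = n ∧ tamariLE p.1 p.2 ∧
        ∀ i j : Fin n, r i j ↔
          Relation.ReflTransGen
            (fun x y : Fin n =>
              decRelT p.1 (x.1 + 1) (y.1 + 1) ∨ incRelT p.2 (x.1 + 1) (y.1 + 1))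
            i j := by
  classical
  constructor
  · rintro ⟨hrefl, hanti, htrans, hint1, hint2⟩
    -- the relation transported to `{1,…,n} ⊆ ℕ`
    set rr : ℕ → ℕ → Prop :=
      fun b a => ∃ x y : Fin n, b = x.1 + 1 ∧ a = y.1 + 1 ∧ r x y with hrrdef
    have rr_of : ∀ x y : Fin n, r x y → rr (x.1 + 1) (y.1 + 1) :=
      fun x y h => ⟨x, y, rfl, rfl, h⟩
    have rr_elim : ∀ x y : Fin n, rr (x.1 + 1) (y.1 + 1) → r x y := by
      rintro x y ⟨x', y', hb, ha, h⟩
      have hx : x' = x := Fin.ext (by omega)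
      have hy : y' = y := Fin.ext (by omega)
      rw [hx, hy] at h
      exact h
    have rr_bounds : ∀ b a, rr b a → 1 ≤ b ∧ b ≤ n ∧ 1 ≤ a ∧ a ≤ n := by
      rintro b a ⟨x, y, hb, ha, -⟩
      have := x.2; have := y.2; omega
    have rr_refl : ∀ a, 1 ≤ a → a ≤ n → rr a a := by
      intro a h1 h2
      exact ⟨⟨a - 1, by omega⟩, ⟨a - 1, by omega⟩, by show a = a - 1 + 1; omega,
        by show a = a - 1 + 1; omega, hrefl _⟩
    have rr_trans : ∀ a b c, rr c b → rr b a → rr c a := by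
      rintro a b c ⟨x, y, hc, hb, hxy⟩ ⟨x', y', hb', ha', hx'y'⟩
      have hx : x' = y := Fin.ext (by omega)
      rw [hx] at hx'y'
      exact ⟨x, y', hc, ha', htrans x y y' hxy hx'y'⟩
    have rr_anti : ∀ a b, rr b a → rr a b → a = b := by
      rintro a b ⟨x, y, hb, ha, hxy⟩ h2
      have h2' : rr (y.1 + 1) (x.1 + 1) := by rw [← hb, ← ha]; exact h2
      have := hanti x y hxy (rr_elim y x h2')
      omega
    have rr_int1 : ∀ a b c, a < b → b < c → rr a c → rr b c := by
      rintro a b c h1 h2 ⟨x, y, hha, hhc, hxy⟩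
      have hb : b - 1 < n := by have := y.2; omega
      refine ⟨⟨b - 1, hb⟩, y, by show b = b - 1 + 1; omega, hhc, ?_⟩
      refine hint1 x ⟨b - 1, hb⟩ y ?_ ?_ hxy
      · show x.1 < b - 1; omega
      · show b - 1 < y.1; omega
    have rr_int2 : ∀ a b c, a < b → b < c → rr c a → rr b a := by
      rintro a b c h1 h2 ⟨x, y, hhc, hha, hxy⟩
      have hb : b - 1 < n := by have := x.2; omega
      refine ⟨⟨b - 1, hb⟩, y, by show b = b - 1 + 1; omega, hha, ?_⟩
      refine hint2 y ⟨b - 1, hb⟩ x ?_ ?_ hxy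
      · show y.1 < b - 1; omega
      · show b - 1 < x.1; omega
    -- the max- and min- vectors of the relation
    set F : ℕ → ℕ := fun a =>
      if h : 1 ≤ a ∧ a ≤ n then Nat.findGreatest (fun b => a ≤ b ∧ rr b a) n else a
      with hFdef
    set G : ℕ → ℕ := fun a =>
      if h : 1 ≤ a ∧ a ≤ n then
        Nat.find (⟨a, h.1, le_rfl, rr_refl a h.1 h.2⟩ : ∃ c, 1 ≤ c ∧ c ≤ a ∧ rr c a)
      else a
      with hGdef
    have hFout : ∀ a, ¬(1 ≤ a ∧ a ≤ n) → F a = a := fun a h => dif_neg h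
    have hGout : ∀ a, ¬(1 ≤ a ∧ a ≤ n) → G a = a := fun a h => dif_neg h
    have hFspec : ∀ a, 1 ≤ a → a ≤ n →
        a ≤ F a ∧ F a ≤ n ∧ rr (F a) a ∧
          (∀ b, F a < b → b ≤ n → ¬(a ≤ b ∧ rr b a)) := by
      intro a h1 h2
      have hF : F a = Nat.findGreatest (fun b => a ≤ b ∧ rr b a) n := dif_pos ⟨h1, h2⟩
      rw [hF]
      obtain ⟨hs1, hs2⟩ := Nat.findGreatest_spec (P := fun b => a ≤ b ∧ rr b a) h2
        ⟨le_rfl, rr_refl a h1 h2⟩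
      exact ⟨hs1, Nat.findGreatest_le n, hs2,
        fun b hb1 hb2 => Nat.findGreatest_is_greatest hb1 hb2⟩
    have hGspec : ∀ a (h1 : 1 ≤ a) (h2 : a ≤ n),
        1 ≤ G a ∧ G a ≤ a ∧ rr (G a) a ∧
          (∀ c, c < G a → ¬(1 ≤ c ∧ c ≤ a ∧ rr c a)) := by
      intro a h1 h2
      have hx : ∃ c, 1 ≤ c ∧ c ≤ a ∧ rr c a := ⟨a, h1, le_rfl, rr_refl a h1 h2⟩
      have hG : G a = Nat.find hx := dif_pos ⟨h1, h2⟩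
      rw [hG]
      obtain ⟨hs1, hs2, hs3⟩ := Nat.find_spec hx
      exact ⟨hs1, hs2, hs3, fun c hc => Nat.find_min hx hc⟩
    -- rr in terms of F and G
    have hrr_of_F : ∀ a b, 1 ≤ a → a ≤ n → a < b → b ≤ F a → rr b a := by
      intro a b h1 h2 h3 h4
      obtain ⟨hs1, hs2, hs3, -⟩ := hFspec a h1 h2
      rcases eq_or_lt_of_le h4 with heq | hlt
      · rw [heq]; exact hs3
      · exact rr_int2 a b (F a) h3 hlt hs3
    have hF_of_rr : ∀ a b, 1 ≤ a → a ≤ n → a ≤ b → b ≤ n → rr b a → b ≤ F a := by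
      intro a b h1 h2 h3 h4 h5
      obtain ⟨-, -, -, hmax⟩ := hFspec a h1 h2
      by_contra hcon
      exact hmax b (by omega) h4 ⟨h3, h5⟩
    have hrr_of_G : ∀ c a, 1 ≤ c → c ≤ n → G c ≤ a → a < c → rr a c := by
      intro c a h1 h2 h3 h4
      obtain ⟨hs1, hs2, hs3, -⟩ := hGspec c h1 h2
      rcases eq_or_lt_of_le h3 with heq | hlt
      · rw [← heq]; exact hs3
      · exact rr_int1 (G c) a c hlt h4 hs3
    have hG_of_rr : ∀ c a, 1 ≤ c → c ≤ n → 1 ≤ a → a ≤ c → rr a c → G c ≤ a := by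
      intro c a h1 h2 h3 h4 h5
      obtain ⟨-, -, -, hmin⟩ := hGspec c h1 h2
      by_contra hcon
      exact hmin a (by omega) ⟨h3, h4, h5⟩
    -- construct the two trees
    obtain ⟨T1, hT1n, hT1f⟩ := tree_of_fVec n F
      (by
        intro a h1 h2
        obtain ⟨hs1, hs2, -, -⟩ := hFspec a h1 h2
        exact ⟨hs1, hs2⟩)
      (fun a ha => hFout a (by omega))
      (by
        intro a b h1 h2 h3
        by_cases h2' : a ≤ n
        · obtain ⟨hs1, hs2, hs3, -⟩ := hFspec a h1 h2'
          have hbn : b ≤ n := by omega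
          have hb1 : 1 ≤ b := by omega
          obtain ⟨ht1, ht2, ht3, -⟩ := hFspec b hb1 hbn
          rcases eq_or_lt_of_le ht1 with heq | hlt
          · omega
          · have hrba : rr b a := hrr_of_F a b h1 h2' h2 h3
            have : rr (F b) a := rr_trans a b (F b) ht3 hrba
            exact hF_of_rr a (F b) h1 h2' (by omega) ht2 this
        · rw [hFout a (by omega)] at h3; omega)
    obtain ⟨T2, hT2n, hT2g⟩ := tree_of_gVec n G
      (by
        intro a h1 h2
        obtain ⟨hs1, hs2, -, -⟩ := hGspec a h1 h2
        exact ⟨hs1, hs2⟩)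
      (fun a ha => hGout a (by omega))
      (by
        intro b c h1 h3
        by_cases hc' : 1 ≤ c ∧ c ≤ n
        · obtain ⟨hs1, hs2, hs3, -⟩ := hGspec c hc'.1 hc'.2
          have hb1 : 1 ≤ b := by omega
          have hbn : b ≤ n := by omega
          obtain ⟨ht1, ht2, ht3, -⟩ := hGspec b hb1 hbn
          have hrbc : rr b c := hrr_of_G c b hc'.1 hc'.2 h3 h1
          have : rr (G b) c := rr_trans c b (G b) ht3 hrbc
          exact hG_of_rr c (G b) hc'.1 hc'.2 ht1 (by omega) this
        · rw [hGout c hc'] at h3 ⊢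
          omega)
    -- the Tamari condition
    have hf12 : ∀ a, 1 ≤ a → a ≤ n → fVec T1 a ≤ fVec T2 a := by
      intro a h1 h2
      by_contra hcon
      push_neg at hcon
      rw [hT1f a h1 h2] at hcon
      obtain ⟨hs1, hs2, -, -⟩ := hFspec a h1 h2
      have hlb : a ≤ fVec T2 a := fVec_lb T2 a h1 (by omega)
      have hgc : gVec T2 (fVec T2 a + 1) ≤ a :=
        gVec_succ_fVec T2 a h1 (by omega) (by omega)
      rw [hT2g (fVec T2 a + 1) (by omega) (by omega)] at hgc
      have hrca : rr (fVec T2 a + 1) a := hrr_of_F a (fVec T2 a + 1) h1 h2 (by omega) (by omega)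
      have hrac : rr a (fVec T2 a + 1) :=
        hrr_of_G (fVec T2 a + 1) a (by omega) (by omega) hgc (by omega)
      have := rr_anti a (fVec T2 a + 1) hrca hrac
      omega
    have ht : tamariLE T1 T2 := by
      apply le_fVec_tamari (∑ a ∈ Finset.Icc 1 (BinaryTree.numNodes T1), (fVec T2 a - fVec T1 a)) T1 T2
        (by omega)
      · intro a ha1 ha2
        exact hf12 a ha1 (by omega)
      · exact le_rfl
    -- the defining property of the pair
    have hr : ∀ i j : Fin n, r i j ↔
        Relation.ReflTransGen
          (fun x y : Fin n =>
            decRelT T1 (x.1 + 1) (y.1 + 1) ∨ incRelT T2 (x.1 + 1) (y.1 + 1)) i j := by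
      intro i j
      rw [closure_eq_R hT1n hT2n hf12 i j]
      have hi2 := i.2
      have hj2 := j.2
      rw [hT1f (j.1 + 1) (by omega) (by omega), hT2g (j.1 + 1) (by omega) (by omega)]
      constructor
      · intro h
        rcases Nat.lt_trichotomy i.1 j.1 with hij | hij | hij
        · refine Or.inr (Or.inr ⟨hij, ?_⟩)
          exact hG_of_rr (j.1 + 1) (i.1 + 1) (by omega) (by omega) (by omega) (by omega)
            (rr_of i j h)
        · exact Or.inl (Fin.ext hij)
        · refine Or.inr (Or.inl ⟨hij, ?_⟩)
          exact hF_of_rr (j.1 + 1) (i.1 + 1) (by omega) (by omega) (by omega) (by omega)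
            (rr_of i j h)
      · intro h
        rcases h with rfl | ⟨h1', h2'⟩ | ⟨h1', h2'⟩
        · exact hrefl i
        · exact rr_elim i j (hrr_of_F (j.1 + 1) (i.1 + 1) (by omega) (by omega) (by omega) h2')
        · exact rr_elim i j (hrr_of_G (j.1 + 1) (i.1 + 1) (by omega) (by omega) h2' (by omega))
    refine ⟨(T1, T2), ⟨hT1n, hT2n, ht, hr⟩, ?_⟩
    -- uniqueness
    rintro ⟨U1, U2⟩ ⟨hU1n, hU2n, hUt, hUr⟩
    dsimp only at hU1n hU2n hUt hUr
    simp only [Tree.numNodes] at hU1n hU2n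
    have hUle : ∀ a, 1 ≤ a → a ≤ n → fVec U1 a ≤ fVec U2 a :=
      fun a _ _ => (tamariLE_fVec_le hUt).2 a
    have hkey : ∀ i j : Fin n, r i j ↔
        (i = j ∨ (j.1 < i.1 ∧ i.1 + 1 ≤ fVec U1 (j.1 + 1)) ∨
          (i.1 < j.1 ∧ gVec U2 (j.1 + 1) ≤ i.1 + 1)) :=
      fun i j => (hUr i j).trans (closure_eq_R hU1n hU2n hUle i j)
    have hU1f : ∀ a, 1 ≤ a → a ≤ n → fVec U1 a = F a := by
      intro a h1 h2
      have hblb : a ≤ fVec U1 a := fVec_lb U1 a h1 (by omega)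
      have hbub : fVec U1 a ≤ n := by
        have := fVec_ub U1 a h1 (by omega); omega
      have hle1 : fVec U1 a ≤ F a := by
        rcases eq_or_lt_of_le hblb with heq | hlt
        · obtain ⟨hs1, -, -, -⟩ := hFspec a h1 h2
          omega
        · have hrb : r ⟨fVec U1 a - 1, by omega⟩ ⟨a - 1, by omega⟩ := by
            apply (hkey _ _).mpr
            refine Or.inr (Or.inl ⟨by show a - 1 < fVec U1 a - 1; omega, ?_⟩)
            show fVec U1 a - 1 + 1 ≤ fVec U1 (a - 1 + 1)
            have e : a - 1 + 1 = a := by omega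
            rw [e]
            omega
          have := rr_of _ _ hrb
          simp only at this
          have e1 : fVec U1 a - 1 + 1 = fVec U1 a := by omega
          have e2 : a - 1 + 1 = a := by omega
          rw [e1, e2] at this
          exact hF_of_rr a (fVec U1 a) h1 h2 (by omega) hbub this
      have hle2 : F a ≤ fVec U1 a := by
        obtain ⟨hs1, hs2, hs3, -⟩ := hFspec a h1 h2
        rcases eq_or_lt_of_le hs1 with heq | hlt
        · omega
        · have hrb : r ⟨F a - 1, by omega⟩ ⟨a - 1, by omega⟩ := by
            apply rr_elim
            have e1 : (⟨F a - 1, by omega⟩ : Fin n).1 + 1 = F a := by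
              show F a - 1 + 1 = F a; omega
            have e2 : (⟨a - 1, by omega⟩ : Fin n).1 + 1 = a := by
              show a - 1 + 1 = a; omega
            rw [e1, e2]
            exact hs3
          have := (hkey _ _).mp hrb
          rcases this with heq2 | ⟨h1', h2'⟩ | ⟨h1', h2'⟩
          · exfalso
            have := congrArg Fin.val heq2
            simp only at this
            omega
          · simp only at h1' h2'
            have e : a - 1 + 1 = a := by omega
            rw [e] at h2'
            omega
          · simp only at h1' h2'
            omega
      omega
    have hU2g : ∀ a, 1 ≤ a → a ≤ n → gVec U2 a = G a := by
      intro a h1 h2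
      have hpos : 1 ≤ gVec U2 a := gVec_pos U2 a
      have hub : gVec U2 a ≤ a := gVec_ub U2 a h1 (by omega)
      have hle1 : G a ≤ gVec U2 a := by
        rcases eq_or_lt_of_le hub with heq | hlt
        · obtain ⟨-, hs2, -, -⟩ := hGspec a h1 h2
          omega
        · have hrb : r ⟨gVec U2 a - 1, by omega⟩ ⟨a - 1, by omega⟩ := by
            apply (hkey _ _).mpr
            refine Or.inr (Or.inr ⟨by show gVec U2 a - 1 < a - 1; omega, ?_⟩)
            show gVec U2 (a - 1 + 1) ≤ gVec U2 a - 1 + 1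
            have e : a - 1 + 1 = a := by omega
            rw [e]
            omega
          have := rr_of _ _ hrb
          simp only at this
          have e1 : gVec U2 a - 1 + 1 = gVec U2 a := by omega
          have e2 : a - 1 + 1 = a := by omega
          rw [e1, e2] at this
          exact hG_of_rr a (gVec U2 a) h1 h2 hpos (by omega) this
      have hle2 : gVec U2 a ≤ G a := by
        obtain ⟨hs1, hs2, hs3, -⟩ := hGspec a h1 h2
        rcases eq_or_lt_of_le hs2 with heq | hlt
        · omega
        · have hrb : r ⟨G a - 1, by omega⟩ ⟨a - 1, by omega⟩ := by
            apply rr_elim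
            have e1 : (⟨G a - 1, by omega⟩ : Fin n).1 + 1 = G a := by
              show G a - 1 + 1 = G a; omega
            have e2 : (⟨a - 1, by omega⟩ : Fin n).1 + 1 = a := by
              show a - 1 + 1 = a; omega
            rw [e1, e2]
            exact hs3
          have := (hkey _ _).mp hrb
          rcases this with heq2 | ⟨h1', h2'⟩ | ⟨h1', h2'⟩
          · exfalso
            have := congrArg Fin.val heq2
            simp only at this
            omega
          · simp only at h1' h2'
            omega
          · simp only at h1' h2'
            have e : a - 1 + 1 = a := by omega
            rw [e] at h2'
            omega
      omega
    have hU1 : U1 = T1 := by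
      apply fVec_inj U1 T1 (by omega)
      intro a ha1 ha2
      rw [hU1f a ha1 (by omega), hT1f a ha1 (by omega)]
    have hU2 : U2 = T2 := by
      apply gVec_inj U2 T2 (by omega)
      intro a ha1 ha2
      rw [hU2g a ha1 (by omega), hT2g a ha1 (by omega)]
    rw [hU1, hU2]
  · rintro ⟨p, ⟨h1, h2, ht, hr⟩, -⟩
    have hle : ∀ a, 1 ≤ a → a ≤ n → fVec p.1 a ≤ fVec p.2 a :=
      fun a _ _ => (tamariLE_fVec_le ht).2 a
    have key : ∀ i j : Fin n, r i j ↔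
        (i = j ∨ (j.1 < i.1 ∧ i.1 + 1 ≤ fVec p.1 (j.1 + 1)) ∨
          (i.1 < j.1 ∧ gVec p.2 (j.1 + 1) ≤ i.1 + 1)) :=
      fun i j => (hr i j).trans (closure_eq_R h1 h2 hle i j)
    obtain ⟨P1, P2, P3, P4, P5⟩ := R_interval (n := n) (T1 := p.1) (T2 := p.2) h1 h2 hle
    exact ⟨fun a => (key a a).mpr (P1 a),
      fun a b hab hba => P2 a b ((key a b).mp hab) ((key b a).mp hba),
      fun a b c hab hbc => (key a c).mpr (P3 a b c ((key a b).mp hab) ((key b c).mp hbc)),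
      fun a b c hab hbc hac => (key b c).mpr (P4 a b c hab hbc ((key a c).mp hac)),
      fun a b c hab hbc hca => (key b a).mpr (P5 a b c hab hbc ((key c a).mp hca))⟩
end

section
/- Every interval-poset I of size n is uniquely determined by a triple (I1, I2, r) where I1 and I2 are interval-posets with size(I1) + size(I2) + 1 = n and 0 ≤ r ≤ trees(I2), via the lower-contacts composition; i.e., the lower-contacts composition LC is a bijection from such triples to interval-posets of size n. -/
/-- An interval-poset: a partial order on `{1,…,n}` such that for `a < b < c`,
`a ≺ c` implies `b ≺ c` and `c ≺ a` implies `b ≺ a`. -/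
structure IPoset where
  n : ℕ
  rel : ℕ → ℕ → Prop
  supp : ∀ ⦃a b⦄, rel a b → 1 ≤ a ∧ a ≤ n ∧ 1 ≤ b ∧ b ≤ n
  refl : ∀ a, 1 ≤ a → a ≤ n → rel a a
  antisymm : ∀ ⦃a b⦄, rel a b → rel b a → a = b
  trans : ∀ ⦃a b c⦄, rel a b → rel b c → rel a c
  inc : ∀ ⦃a b c⦄, a < b → b < c → rel a c → rel b c
  dec : ∀ ⦃a b c⦄, a < b → b < c → rel c a → rel b a

open scoped Classical in
/-- The initial rise `ir I`: the largest `k ≤ n` such that no relation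
`i-1 ≺ i` holds for `2 ≤ i ≤ k`. -/
noncomputable def ir (I : IPoset) : ℕ :=
  Nat.findGreatest (fun k => ∀ i, 2 ≤ i → i ≤ k → ¬ I.rel (i - 1) i) I.n

/-- `x` is a root of the final forest (the forest of decreasing relations) of `I`. -/
def IsDecRoot (I : IPoset) (x : ℕ) : Prop :=
  1 ≤ x ∧ x ≤ I.n ∧ ∀ y, y < x → ¬ I.rel x y

/-- `trees I`: the number of connected components of the final forest of `I`,
i.e. the number of its roots. -/
noncomputable def trees (I : IPoset) : ℕ := Set.ncard {x | IsDecRoot I x}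

/-- The relation of the lower-contacts composition `LC(I₁, I₂, r)`: shifted
concatenation of `I₁`, a new vertex `k = n₁ + 1`, and `I₂`, where every vertex
of `I₁` precedes `k` and the vertices below one of the `r` smallest roots of
the final forest of `I₂` precede `k`. -/
def LCrel (I1 I2 : IPoset) (r : ℕ) : ℕ → ℕ → Prop := fun x y =>
  let k := I1.n + 1
  (x ≤ I1.n ∧ y ≤ I1.n ∧ I1.rel x y) ∨
  (k < x ∧ k < y ∧ I2.rel (x - k) (y - k)) ∨
  (x = k ∧ y = k) ∨
  (y = k ∧ 1 ≤ x ∧ x ≤ I1.n) ∨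
  (y = k ∧ k < x ∧ x ≤ k + I2.n ∧
    ∃ s, IsDecRoot I2 s ∧ Set.ncard {z | IsDecRoot I2 z ∧ z ≤ s} ≤ r ∧
      (x - k = s ∨ (s < x - k ∧ I2.rel (x - k) s)))

lemma IPoset.ext' {I J : IPoset} (hn : I.n = J.n) (hr : ∀ x y, I.rel x y ↔ J.rel x y) :
    I = J := by
  have h2 : I.rel = J.rel := by funext x y; exact propext (hr x y)
  cases I; cases J; simp_all

lemma rootSet_finite (I : IPoset) : {x | IsDecRoot I x}.Finite := by
  apply Set.Finite.subset (Set.finite_Icc 1 I.n)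
  intro x hx; exact ⟨hx.1, hx.2.1⟩

/-- the rank lemma -/
lemma rank_card (R : Finset ℕ) (r : ℕ) (hr : r ≤ R.card) :
    (R.filter (fun s => (R.filter (fun z => z ≤ s)).card ≤ r)).card = r := by
  classical
  set c := R.card with hc
  let f : Fin c → ℕ := fun i => (R.orderIsoOfFin hc.symm i : ℕ)
  have hfmem : ∀ i, f i ∈ R := fun i => (R.orderIsoOfFin hc.symm i).2
  have hfmono : ∀ i j : Fin c, f i ≤ f j ↔ i ≤ j := by
    intro i j
    constructor
    · intro h
      have h2 : (R.orderIsoOfFin hc.symm) i ≤ (R.orderIsoOfFin hc.symm) j := by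
        exact_mod_cast h
      exact (R.orderIsoOfFin hc.symm).le_iff_le.mp h2
    · intro h; exact (R.orderIsoOfFin hc.symm).monotone h
  have hfsurj : ∀ z ∈ R, ∃ i, f i = z := by
    intro z hz
    obtain ⟨i, hi⟩ := (R.orderIsoOfFin hc.symm).surjective ⟨z, hz⟩
    exact ⟨i, congrArg Subtype.val hi⟩
  have hfinj : Function.Injective f := by
    intro i j h
    exact (R.orderIsoOfFin hc.symm).injective (Subtype.ext h)
  have hrank : ∀ i : Fin c, (R.filter (fun z => z ≤ f i)).card = i + 1 := by
    intro i
    have : R.filter (fun z => z ≤ f i) = (Finset.Iic i).image f := by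
      ext z
      simp only [Finset.mem_filter, Finset.mem_image, Finset.mem_Iic]
      constructor
      · rintro ⟨hz, hle⟩
        obtain ⟨j, rfl⟩ := hfsurj z hz
        exact ⟨j, (hfmono j i).1 hle, rfl⟩
      · rintro ⟨j, hj, rfl⟩
        exact ⟨hfmem j, (hfmono j i).2 hj⟩
    rw [this, Finset.card_image_of_injective _ hfinj, Fin.card_Iic]
  have key : R.filter (fun s => (R.filter (fun z => z ≤ s)).card ≤ r)
      = (Finset.univ.filter (fun i : Fin c => (i : ℕ) < r)).image f := by
    ext s
    simp only [Finset.mem_filter, Finset.mem_image, Finset.mem_univ, true_and]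
    constructor
    · rintro ⟨hs, hle⟩
      obtain ⟨i, rfl⟩ := hfsurj s hs
      rw [hrank i] at hle
      exact ⟨i, by omega, rfl⟩
    · rintro ⟨i, hi, rfl⟩
      exact ⟨hfmem i, by rw [hrank i]; omega⟩
  rw [key, Finset.card_image_of_injective _ hfinj]
  have : Finset.univ.filter (fun i : Fin c => (i : ℕ) < r)
      = (Finset.range r).attachFin (fun m hm => by rw [Finset.mem_range] at hm; omega) := by
    ext i
    simp [Finset.mem_attachFin]
  rw [this, Finset.card_attachFin, Finset.card_range]

lemma rank_ncard (R : Set ℕ) (hR : R.Finite) (r : ℕ) (hr : r ≤ R.ncard) :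
    {s | s ∈ R ∧ ({z | z ∈ R ∧ z ≤ s}).ncard ≤ r}.ncard = r := by
  classical
  set F := hR.toFinset with hF
  have hmem : ∀ z, z ∈ R ↔ z ∈ F := by intro z; simp [hF]
  have h1 : ∀ s, {z | z ∈ R ∧ z ≤ s} = ↑(F.filter (fun z => z ≤ s)) := by
    intro s; ext z; simp [hmem z]
  have h2 : {s | s ∈ R ∧ ({z | z ∈ R ∧ z ≤ s}).ncard ≤ r}
      = ↑(F.filter (fun s => (F.filter (fun z => z ≤ s)).card ≤ r)) := by
    ext s
    have h3 : {x | x ∈ F ∧ x ≤ s}.ncard = (F.filter (fun z => z ≤ s)).card := by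
      rw [← Set.ncard_coe_finset]; congr 1; ext z; simp
    simp only [Set.mem_setOf_eq, Finset.coe_filter, hmem s, h1 s, Set.ncard_coe_finset, h3]
  rw [h2, Set.ncard_coe_finset]
  apply rank_card
  have : R.ncard = F.card := by
    rw [hF, ← Set.ncard_coe_finset, Set.Finite.coe_toFinset]
  omega
  
lemma exists_min_rel (I : IPoset) (m : ℕ) (h1 : 1 ≤ m) (h2 : m ≤ I.n) :
    ∃ s, IsDecRoot I s ∧ s ≤ m ∧ I.rel m s ∧ ∀ y, I.rel m y → s ≤ y := by
  classical
  have hex : ∃ y, I.rel m y := ⟨m, I.refl m h1 h2⟩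
  set s := Nat.find hex with hs
  have hrel : I.rel m s := Nat.find_spec hex
  have hmin : ∀ y, I.rel m y → s ≤ y := fun y hy => Nat.find_le hy
  have hsupp := I.supp hrel
  refine ⟨s, ⟨hsupp.2.2.1, hsupp.2.2.2, ?_⟩, hmin m (I.refl m h1 h2), hrel, hmin⟩
  intro y hy hrel2
  have := hmin y (I.trans hrel hrel2)
  omega

lemma ncard_roots_mono (I : IPoset) {s s' : ℕ} (h : s ≤ s') :
    ({z | IsDecRoot I z ∧ z ≤ s}).ncard ≤ ({z | IsDecRoot I z ∧ z ≤ s'}).ncard := by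
  apply Set.ncard_le_ncard
  · intro z hz; exact ⟨hz.1, le_trans hz.2 h⟩
  · exact Set.Finite.subset (rootSet_finite I) (fun z hz => hz.1)

lemma lcrel_def (I1 I2 : IPoset) (r x y : ℕ) :
    LCrel I1 I2 r x y ↔
    ((x ≤ I1.n ∧ y ≤ I1.n ∧ I1.rel x y) ∨
    (I1.n + 1 < x ∧ I1.n + 1 < y ∧ I2.rel (x - (I1.n+1)) (y - (I1.n+1))) ∨
    (x = I1.n+1 ∧ y = I1.n+1) ∨
    (y = I1.n+1 ∧ 1 ≤ x ∧ x ≤ I1.n) ∨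
    (y = I1.n+1 ∧ I1.n+1 < x ∧ x ≤ (I1.n+1) + I2.n ∧
      ∃ s, IsDecRoot I2 s ∧ Set.ncard {z | IsDecRoot I2 z ∧ z ≤ s} ≤ r ∧
        (x - (I1.n+1) = s ∨ (s < x - (I1.n+1) ∧ I2.rel (x - (I1.n+1)) s)))) := Iff.rfl

/-- canonical form of the "below one of the first r roots" condition -/
lemma below_iff (I2 : IPoset) (r m : ℕ) (h1 : 1 ≤ m) (h2 : m ≤ I2.n) :
    (∃ s, IsDecRoot I2 s ∧ Set.ncard {z | IsDecRoot I2 z ∧ z ≤ s} ≤ r ∧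
      (m = s ∨ (s < m ∧ I2.rel m s)))
    ↔ ∃ s, IsDecRoot I2 s ∧ Set.ncard {z | IsDecRoot I2 z ∧ z ≤ s} ≤ r ∧ I2.rel m s := by
  constructor
  · rintro ⟨s, hroot, hrank, he | ⟨hlt, hrel⟩⟩
    · refine ⟨s, hroot, hrank, ?_⟩; rw [he]; exact I2.refl s hroot.1 hroot.2.1
    · exact ⟨s, hroot, hrank, hrel⟩
  · rintro ⟨s, hroot, hrank, hrel⟩
    obtain ⟨s', hroot', hle', hrel', hmin'⟩ := exists_min_rel I2 m h1 h2
    have hss : s' ≤ s := hmin' s hrel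
    refine ⟨s', hroot', le_trans (ncard_roots_mono I2 hss) hrank, ?_⟩
    rcases eq_or_lt_of_le hle' with he | hlt
    · exact Or.inl he.symm
    · exact Or.inr ⟨hlt, hrel'⟩

def LCposet (I1 I2 : IPoset) (r : ℕ) : IPoset where
  n := I1.n + I2.n + 1
  rel := LCrel I1 I2 r
  supp := by
    intro a b h
    rw [lcrel_def] at h
    rcases h with ⟨ha, hb, h⟩ | ⟨ha, hb, h⟩ | ⟨ha, hb⟩ | ⟨hb, ha1, ha2⟩ | ⟨hb, ha1, ha2, -⟩
    · have h1 := I1.supp h; omega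
    · have h2 := I2.supp h; omega
    · omega
    · omega
    · omega
  refl := by
    intro a h1 h2
    rw [lcrel_def]
    by_cases hc1 : a ≤ I1.n
    · exact Or.inl ⟨hc1, hc1, I1.refl a h1 hc1⟩
    · by_cases hc2 : a = I1.n + 1
      · exact Or.inr (Or.inr (Or.inl ⟨hc2, hc2⟩))
      · exact Or.inr (Or.inl ⟨by omega, by omega, I2.refl _ (by omega) (by omega)⟩)
  antisymm := by
    intro a b h1 h2
    rw [lcrel_def] at h1 h2
    rcases h1 with ⟨ha1,hb1,h1⟩|⟨ha1,hb1,h1⟩|⟨ha1,hb1⟩|⟨hb1,ha1,ha1'⟩|⟨hb1,ha1,ha1',-⟩ <;>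
      rcases h2 with ⟨ha2,hb2,h2⟩|⟨ha2,hb2,h2⟩|⟨ha2,hb2⟩|⟨hb2,ha2,ha2'⟩|⟨hb2,ha2,ha2',-⟩ <;>
      first
        | exact I1.antisymm h1 h2
        | (have := I2.antisymm h1 h2; omega)
        | omega
  trans := by
    intro a b c h1 h2
    rw [lcrel_def] at h1 h2 ⊢
    rcases h1 with ⟨ha1,hb1,h1⟩|⟨ha1,hb1,h1⟩|⟨ha1,hb1⟩|⟨hb1,ha1,ha1'⟩|⟨hb1,ha1,ha1',hex1⟩ <;>
      rcases h2 with ⟨hb2,hc2,h2⟩|⟨hb2,hc2,h2⟩|⟨hb2,hc2⟩|⟨hc2,hb2,hb2'⟩|⟨hc2,hb2,hb2',hex2⟩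
    all_goals first
      | (exfalso; omega)
      | exact Or.inl ⟨ha1, hc2, I1.trans h1 h2⟩
      | exact Or.inr (Or.inl ⟨ha1, hc2, I2.trans h1 h2⟩)
      | exact Or.inr (Or.inr (Or.inl ⟨ha1, hc2⟩))
      | exact Or.inr (Or.inr (Or.inr (Or.inl ⟨hc2, (I1.supp h1).1, ha1⟩)))
      | exact Or.inr (Or.inr (Or.inr (Or.inl ⟨hc2, ha1, ha1'⟩)))
      | exact Or.inr (Or.inr (Or.inr (Or.inr ⟨hc2, ha1, ha1', hex1⟩)))
      | (refine Or.inr (Or.inr (Or.inr (Or.inr ⟨hc2, ha1, by have := I2.supp h1; omega, ?_⟩)))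
         have hm1 : 1 ≤ a - (I1.n+1) := by omega
         have hm2 : a - (I1.n+1) ≤ I2.n := by have := I2.supp h1; omega
         apply (below_iff I2 r _ hm1 hm2).2
         obtain ⟨s, hroot, hrank, hcase⟩ := hex2
         refine ⟨s, hroot, hrank, ?_⟩
         rcases hcase with he | ⟨-, hrel⟩
         · rwa [← he]
         · exact I2.trans h1 hrel)
  inc := by
    intro a b c hab hbc h
    rw [lcrel_def] at h ⊢
    rcases h with ⟨ha, hc, h⟩ | ⟨ha, hc, h⟩ | ⟨ha, hc⟩ | ⟨hc, ha1, ha2⟩ | ⟨hc, ha1, ha2, -⟩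
    · exact Or.inl ⟨by omega, hc, I1.inc hab hbc h⟩
    · exact Or.inr (Or.inl ⟨by omega, hc, I2.inc (by omega) (by omega) h⟩)
    · exfalso; omega
    · exact Or.inr (Or.inr (Or.inr (Or.inl ⟨hc, by omega, by omega⟩)))
    · exfalso; omega
  dec := by
    intro a b c hab hbc h
    rw [lcrel_def] at h ⊢
    rcases h with ⟨hc, ha, h⟩ | ⟨hc, ha, h⟩ | ⟨hc, ha⟩ | ⟨ha, hc1, hc2⟩ | ⟨ha, hc1, hc2, s, hroot, hrank, hcase⟩
    · exact Or.inl ⟨by omega, ha, I1.dec hab hbc h⟩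
    · exact Or.inr (Or.inl ⟨by omega, ha, I2.dec (by omega) (by omega) h⟩)
    · exfalso; omega
    · exfalso; omega
    · refine Or.inr (Or.inr (Or.inr (Or.inr ⟨ha, by omega, by omega, ?_⟩)))
      by_cases hbs : s < b - (I1.n + 1)
      · have hrelcs : I2.rel (c - (I1.n+1)) s := by
          rcases hcase with he | ⟨-, hr2⟩
          · exfalso; omega
          · exact hr2
        exact ⟨s, hroot, hrank, Or.inr ⟨hbs, I2.dec hbs (by omega) hrelcs⟩⟩
      · push_neg at hbs
        obtain ⟨s', hroot', hle', hrel', hmin'⟩ :=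
          exists_min_rel I2 (b - (I1.n+1)) (by omega) (by have := hroot.2.1; omega)
        refine ⟨s', hroot', le_trans (ncard_roots_mono I2 (le_trans hle' hbs)) hrank, ?_⟩
        rcases eq_or_lt_of_le hle' with he | hlt
        · exact Or.inl he.symm
        · exact Or.inr ⟨hlt, hrel'⟩

def restrictLow (J : IPoset) (m : ℕ) (hm : m ≤ J.n) : IPoset where
  n := m - 1
  rel := fun x y => J.rel x y ∧ x ≤ m - 1 ∧ y ≤ m - 1
  supp := by rintro a b ⟨h, ha, hb⟩; exact ⟨(J.supp h).1, ha, (J.supp h).2.2.1, hb⟩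
  refl := fun a h1 h2 => ⟨J.refl a h1 (by omega), h2, h2⟩
  antisymm := by rintro a b ⟨h1, -, -⟩ ⟨h2, -, -⟩; exact J.antisymm h1 h2
  trans := by rintro a b c ⟨h1, ha, -⟩ ⟨h2, -, hc⟩; exact ⟨J.trans h1 h2, ha, hc⟩
  inc := by rintro a b c hab hbc ⟨h, ha, hc⟩; exact ⟨J.inc hab hbc h, by omega, hc⟩
  dec := by rintro a b c hab hbc ⟨h, hc, ha⟩; exact ⟨J.dec hab hbc h, by omega, ha⟩

def restrictHigh (J : IPoset) (m : ℕ) : IPoset where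
  n := J.n - m
  rel := fun x y => J.rel (x + m) (y + m) ∧ 1 ≤ x ∧ 1 ≤ y
  supp := by
    rintro a b ⟨h, ha, hb⟩
    have := J.supp h
    exact ⟨ha, by omega, hb, by omega⟩
  refl := fun a h1 h2 => ⟨J.refl (a + m) (by omega) (by omega), h1, h1⟩
  antisymm := by rintro a b ⟨h1, -, -⟩ ⟨h2, -, -⟩; have := J.antisymm h1 h2; omega
  trans := by rintro a b c ⟨h1, ha, -⟩ ⟨h2, -, hc⟩; exact ⟨J.trans h1 h2, ha, hc⟩
  inc := by rintro a b c hab hbc ⟨h, ha, hc⟩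
            exact ⟨J.inc (by omega) (by omega) h, by omega, hc⟩
  dec := by rintro a b c hab hbc ⟨h, hc, ha⟩
            exact ⟨J.dec (by omega) (by omega) h, by omega, ha⟩

lemma part2 (J : IPoset) (hn : 1 ≤ J.n) :
    ∃! t : IPoset × IPoset × ℕ,
      t.1.n + t.2.1.n + 1 = J.n ∧ t.2.2 ≤ trees t.2.1 ∧
      ∀ x y, J.rel x y ↔ LCrel t.1 t.2.1 t.2.2 x y := by
  classical
  set P : ℕ → Prop := fun y => ∀ i, 1 ≤ i → i < y → J.rel i y with hP
  set m := Nat.findGreatest P J.n with hm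
  have hP1 : P 1 := fun i h1 h2 => absurd h2 (by omega)
  have hm1 : 1 ≤ m := Nat.le_findGreatest hn hP1
  have hmn : m ≤ J.n := Nat.findGreatest_le J.n
  have hmP' : P m := Nat.findGreatest_spec (m := 1) hn hP1
  have hmP : ∀ i, 1 ≤ i → i < m → J.rel i m := hmP'
  have hmax : ∀ y, m < y → y ≤ J.n → ¬ P y := fun y h1 h2 => Nat.findGreatest_is_greatest h1 h2
  have honly : ∀ y, J.rel m y → y = m := by
    intro y h
    have hy := J.supp h
    rcases lt_trichotomy y m with hlt | he | hgt
    · exact J.antisymm (hmP y hy.2.2.1 hlt) h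
    · exact he
    · exfalso
      apply hmax y hgt hy.2.2.2
      intro i h1 h2
      rcases lt_trichotomy i m with hi | hi | hi
      · exact J.trans (hmP i h1 hi) h
      · rwa [hi]
      · exact J.inc hi h2 h
  set I1 : IPoset := restrictLow J m hmn with hI1
  set I2 : IPoset := restrictHigh J m with hI2
  have e1 : I1.n = m - 1 := rfl
  have e2 : I2.n = J.n - m := rfl
  have hrel1 : ∀ a b, I1.rel a b ↔ (J.rel a b ∧ a ≤ m - 1 ∧ b ≤ m - 1) := fun a b => Iff.rfl
  have hrel2 : ∀ a b, I2.rel a b ↔ (J.rel (a + m) (b + m) ∧ 1 ≤ a ∧ 1 ≤ b) := fun a b => Iff.rfl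
  set A : Set ℕ := {s | IsDecRoot I2 s ∧ J.rel (s + m) m} with hA
  have hAsub : A ⊆ {x | IsDecRoot I2 x} := fun s hs => hs.1
  have hAfin : A.Finite := (rootSet_finite I2).subset hAsub
  set r := A.ncard with hr
  have hrle : r ≤ trees I2 := Set.ncard_le_ncard hAsub (rootSet_finite I2)
  -- downward closure
  have d1 : ∀ s s', IsDecRoot I2 s → s ≤ s' → J.rel (s' + m) m → J.rel (s + m) m := by
    intro s s' hroot hle h
    rcases eq_or_lt_of_le hle with he | hlt
    · rwa [he]
    · exact J.dec (show m < s + m by have := hroot.1; omega) (by omega) h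
  have d2 : ∀ s ∈ A, ({z | IsDecRoot I2 z ∧ z ≤ s}).ncard ≤ r := by
    intro s hs
    apply Set.ncard_le_ncard _ hAfin
    intro z hz
    exact ⟨hz.1, d1 z s hz.1 hz.2 hs.2⟩
  have d3 : ∀ s, IsDecRoot I2 s → ({z | IsDecRoot I2 z ∧ z ≤ s}).ncard ≤ r → s ∈ A := by
    intro s hroot hrank
    by_contra hns
    set B : Set ℕ := {z | IsDecRoot I2 z ∧ z ≤ s} with hB
    have hBfin : B.Finite := (rootSet_finite I2).subset (fun z hz => hz.1)
    have hsB : s ∈ B := ⟨hroot, le_refl s⟩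
    have hsubd : A ⊆ B \ {s} := by
      intro z hz
      have hzs : z ≤ s := by
        by_contra hzs
        exact hns ⟨hroot, d1 s z hroot (by omega) hz.2⟩
      refine ⟨⟨hz.1, hzs⟩, ?_⟩
      intro hzeq
      simp only [Set.mem_singleton_iff] at hzeq
      exact hns (hzeq ▸ hz)
    have h1 : A.ncard ≤ (B \ {s}).ncard :=
      Set.ncard_le_ncard hsubd (hBfin.subset Set.diff_subset)
    have h2 : (B \ {s}).ncard = B.ncard - 1 := Set.ncard_diff_singleton_of_mem hsB
    have h3 : 0 < B.ncard := (Set.ncard_pos hBfin).2 ⟨s, hsB⟩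
    omega
  have hLC : ∀ x y, LCrel I1 I2 r x y ↔
      ((x ≤ m - 1 ∧ y ≤ m - 1 ∧ I1.rel x y) ∨
      (m < x ∧ m < y ∧ I2.rel (x - m) (y - m)) ∨
      (x = m ∧ y = m) ∨
      (y = m ∧ 1 ≤ x ∧ x ≤ m - 1) ∨
      (y = m ∧ m < x ∧ x ≤ m + (J.n - m) ∧
        ∃ s, IsDecRoot I2 s ∧ Set.ncard {z | IsDecRoot I2 z ∧ z ≤ s} ≤ r ∧
          (x - m = s ∨ (s < x - m ∧ I2.rel (x - m) s)))) := by
    intro x y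
    rw [lcrel_def, e1, e2, show m - 1 + 1 = m from by omega]
  have hiff : ∀ x y, J.rel x y ↔ LCrel I1 I2 r x y := by
    intro x y
    rw [hLC]
    constructor
    · intro h
      have hsb := J.supp h
      by_cases hym : y = m
      · have hxm : J.rel x m := hym ▸ h
        by_cases hxlt : x < m
        · exact Or.inr (Or.inr (Or.inr (Or.inl ⟨hym, hsb.1, by omega⟩)))
        · by_cases hxe : x = m
          · exact Or.inr (Or.inr (Or.inl ⟨hxe, hym⟩))
          · have hxgt : m < x := by omega
            have hxm2 : x - m ≤ I2.n := by rw [e2]; omega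
            obtain ⟨s, hroot, hle, hrel, hmin⟩ := exists_min_rel I2 (x - m) (by omega) hxm2
            have hsm : J.rel (s + m) m := by
              rcases eq_or_lt_of_le hle with he | hlt
              · have hx' : s + m = x := by omega
                rw [hx']; exact hxm
              · exact J.dec (show m < s + m by have := hroot.1; omega) (by omega) hxm
            refine Or.inr (Or.inr (Or.inr (Or.inr
              ⟨hym, hxgt, by omega, s, hroot, d2 s ⟨hroot, hsm⟩, ?_⟩)))
            rcases eq_or_lt_of_le hle with he | hlt
            · exact Or.inl he.symm
            · exact Or.inr ⟨hlt, hrel⟩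
      · by_cases hxm : x = m
        · exact absurd (honly y (hxm ▸ h)) hym
        · by_cases hylt : y < m
          · by_cases hxlt : x < m
            · exact Or.inl ⟨by omega, by omega, (hrel1 x y).2 ⟨h, by omega, by omega⟩⟩
            · exact absurd (honly y (J.dec hylt (by omega) h)) hym
          · have hygt : m < y := by omega
            by_cases hxlt : x < m
            · exact absurd (honly y (J.inc hxlt hygt h)) hym
            · have hxgt : m < x := by omega
              refine Or.inr (Or.inl ⟨hxgt, hygt, (hrel2 (x-m) (y-m)).2 ⟨?_, by omega, by omega⟩⟩)
              rwa [show x - m + m = x from by omega, show y - m + m = y from by omega]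
    · rintro (⟨hx, hy, h⟩ | ⟨hx, hy, h⟩ | ⟨hx, hy⟩ | ⟨hy, hx1, hx2⟩ |
        ⟨hy, hx1, hx2, s, hroot, hrank, hcase⟩)
      · exact ((hrel1 x y).1 h).1
      · have := ((hrel2 _ _).1 h).1
        rwa [show x - m + m = x from by omega, show y - m + m = y from by omega] at this
      · rw [hx, hy]; exact J.refl m hm1 hmn
      · rw [hy]; exact hmP x hx1 (by omega)
      · have hsm : J.rel (s + m) m := (d3 s hroot hrank).2
        rw [hy]
        rcases hcase with he | ⟨hlt, hrel⟩
        · rw [show x = s + m from by omega]; exact hsm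
        · have hj : J.rel x (s + m) := by
            have := ((hrel2 (x - m) s).1 hrel).1
            rwa [show x - m + m = x from by omega] at this
          exact J.trans hj hsm
  refine ⟨(I1, I2, r), ⟨by simp only [e1, e2]; omega, hrle, hiff⟩, ?_⟩
  rintro ⟨J1, J2, r'⟩ ⟨hsum', hr', hiff'⟩
  simp only at hsum' hr' hiff'
  have p1 : ∀ y, 1 ≤ y → y ≤ J1.n → J.rel y (J1.n + 1) := by
    intro y h1 h2
    exact (hiff' y (J1.n + 1)).2 ((lcrel_def J1 J2 r' _ _).2
      (Or.inr (Or.inr (Or.inr (Or.inl ⟨rfl, h1, h2⟩)))))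
  have p2 : ∀ y, J.rel (J1.n + 1) y → y = J1.n + 1 := by
    intro y h
    have hl := (hiff' _ y).1 h
    rw [lcrel_def] at hl
    rcases hl with ⟨h1,-,-⟩|⟨h1,-,-⟩|⟨-,h2⟩|⟨h2,-,-⟩|⟨h2,-,-,-⟩ <;> omega
  have hkm : J1.n + 1 = m := by
    rcases lt_trichotomy (J1.n + 1) m with hlt | he | hgt
    · have := p2 m (hmP (J1.n + 1) (by omega) hlt); omega
    · exact he
    · have := honly (J1.n + 1) (p1 m hm1 (by omega)); omega
  have hj2n : J2.n = J.n - m := by omega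
  have hJ1eq : J1 = I1 := by
    apply IPoset.ext' (by rw [e1]; omega)
    intro x y
    constructor
    · intro h
      have hb := J1.supp h
      refine (hrel1 x y).2 ⟨?_, by omega, by omega⟩
      exact (hiff' x y).2 ((lcrel_def J1 J2 r' _ _).2 (Or.inl ⟨hb.2.1, hb.2.2.2, h⟩))
    · intro h
      obtain ⟨hj, hxb, hyb⟩ := (hrel1 x y).1 h
      have hl := (hiff' x y).1 hj
      rw [lcrel_def] at hl
      rcases hl with ⟨-,-,hj1⟩|⟨h1,-,-⟩|⟨-,h2⟩|⟨h2,-,-⟩|⟨h2,-,-,-⟩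
      · exact hj1
      all_goals (exfalso; omega)
  have hJ2eq : J2 = I2 := by
    apply IPoset.ext' (by rw [e2]; omega)
    intro a b
    constructor
    · intro h
      have hb := J2.supp h
      refine (hrel2 a b).2 ⟨?_, by omega, by omega⟩
      apply (hiff' (a + m) (b + m)).2
      rw [lcrel_def]
      refine Or.inr (Or.inl ⟨by omega, by omega, ?_⟩)
      rwa [show a + m - (J1.n + 1) = a from by omega,
        show b + m - (J1.n + 1) = b from by omega]
    · intro h
      obtain ⟨hj, ha, hb⟩ := (hrel2 a b).1 h
      have hl := (hiff' (a + m) (b + m)).1 hj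
      rw [lcrel_def] at hl
      rcases hl with ⟨h1,h2,-⟩|⟨-,-,hj2⟩|⟨-,h2⟩|⟨h2,-,-⟩|⟨h2,-,-,-⟩
      · exfalso; omega
      · rwa [show a + m - (J1.n + 1) = a from by omega,
          show b + m - (J1.n + 1) = b from by omega] at hj2
      · exfalso; omega
      · exfalso; omega
      · exfalso; omega
  have hAr' : A = {s | IsDecRoot I2 s ∧ Set.ncard {z | IsDecRoot I2 z ∧ z ≤ s} ≤ r'} := by
    ext s
    simp only [hA, Set.mem_setOf_eq]
    constructor
    · rintro ⟨hroot, hrel⟩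
      refine ⟨hroot, ?_⟩
      have hl := (hiff' (s + m) m).1 hrel
      rw [lcrel_def] at hl
      rcases hl with ⟨h1,h2,-⟩|⟨-,h2,-⟩|⟨h1,-⟩|⟨-,-,h2⟩|⟨-,-,-,s0,hroot0,hrank0,hc0⟩
      · exfalso; omega
      · exfalso; omega
      · exfalso; have := hroot.1; omega
      · exfalso; have := hroot.1; omega
      · rw [hJ2eq] at hroot0 hrank0 hc0
        rw [hkm, show s + m - m = s from by omega] at hc0
        rcases hc0 with he | ⟨hlt0, hrel0⟩
        · rw [he]; exact hrank0
        · exact absurd hrel0 (hroot.2.2 s0 hlt0)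
    · rintro ⟨hroot, hrank⟩
      refine ⟨hroot, ?_⟩
      apply (hiff' (s + m) m).2
      rw [lcrel_def, hkm, hJ2eq]
      have hsle : s ≤ J.n - m := by have := hroot.2.1; rw [e2] at this; omega
      refine Or.inr (Or.inr (Or.inr (Or.inr ⟨rfl, by have := hroot.1; omega, ?_,
        s, hroot, hrank, Or.inl (by omega)⟩)))
      rw [e2]; have := hroot.1; omega
  have hrr' : r = r' := by
    rw [hr, hAr']
    exact rank_ncard {x | IsDecRoot I2 x} (rootSet_finite I2) r'
      (by rw [hJ2eq] at hr'; exact hr')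
  rw [hJ1eq, hJ2eq, hrr']

/-- The lower-contacts composition is a bijection: every interval-poset `I` of
size `n ≥ 1` is uniquely determined by a triple `(I₁, I₂, r)` with
`size I₁ + size I₂ + 1 = n` and `0 ≤ r ≤ trees I₂`, via `I = LC(I₁, I₂, r)`. -/
theorem lower_contacts_bijection (n : ℕ) (hn : 1 ≤ n) :
    (∀ I1 I2 : IPoset, ∀ r : ℕ, I1.n + I2.n + 1 = n → r ≤ trees I2 →
      ∃! J : IPoset, J.n = n ∧ ∀ x y, J.rel x y ↔ LCrel I1 I2 r x y) ∧
    (∀ J : IPoset, J.n = n →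
      ∃! t : IPoset × IPoset × ℕ,
        t.1.n + t.2.1.n + 1 = n ∧ t.2.2 ≤ trees t.2.1 ∧
        ∀ x y, J.rel x y ↔ LCrel t.1 t.2.1 t.2.2 x y) := by
  constructor
  · intro I1 I2 r hsum hr
    refine ⟨LCposet I1 I2 r, ⟨hsum, fun x y => Iff.rfl⟩, ?_⟩
    rintro J' ⟨hn', hrel'⟩
    refine IPoset.ext' ?_ (fun x y => hrel' x y)
    show J'.n = I1.n + I2.n + 1
    omega
  · intro J hJ
    rw [← hJ]
    exact part2 J (by rw [hJ]; exact hn)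
end
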